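/- arXiv:2008.12634 — 8 statements merged into one kernel-verified Lean document; each statement's English description precedes it below -/
import Mathlib

section
/- The affine map r(z) = R(z) + (0, ..., 0, 1/(4n)) of A' descends to a well-defined bijection r̄ of the quotient A = A'/⟨w⟩ (i.e., r maps any two points of A' differing by an element of the subgroup generated by w to points differing by an element of that subgroup), and r̄ has order exactly 4n as a bijection of A. -/
noncomputable section

/-- The lattice Λ = ℤ + ℤτ as an additive subgroup of ℂ. -/
def Lam (τ : ℂ) : AddSubgroup ℂ := AddSubgroup.closure {1, τ}

/-- The "elliptic curve" E = ℂ/(ℤ + ℤτ) as an additive group. -/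
abbrev Ell (τ : ℂ) : Type := ℂ ⧸ Lam τ

/-- A' = E^{2n} × E'. -/
abbrev Aprime (n : ℕ) (τ τ' : ℂ) : Type := (Fin (2*n) → Ell τ) × Ell τ'

/-- w = (1/2, 1/2, ..., 1/2, 0) ∈ A'. -/
def wpt (n : ℕ) (τ τ' : ℂ) : Aprime n τ τ' :=
  (fun _ => ((1/2 : ℂ) : Ell τ), 0)

/-- The subgroup ⟨w⟩ of A' generated by w. -/
def wsub (n : ℕ) (τ τ' : ℂ) : AddSubgroup (Aprime n τ τ') :=
  AddSubgroup.closure {wpt n τ τ'}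

/-- A = A'/⟨w⟩. -/
abbrev Aq (n : ℕ) (τ τ' : ℂ) : Type := Aprime n τ τ' ⧸ wsub n τ τ'

/-- R(z₁,...,z_{2n},z_{2n+1}) = (-z_{2n}, z₁, ..., z_{2n-1}, z_{2n+1}). -/
def Rmap (n : ℕ) (τ τ' : ℂ) : Aprime n τ τ' → Aprime n τ τ' :=
  fun z => (fun i =>
    if i.val = 0 then -z.1 ⟨2*n-1, by have := i.isLt; omega⟩
    else z.1 ⟨i.val - 1, by have := i.isLt; omega⟩, z.2)

/-- The class of 1/(4n) in E'. -/
def cE' (n : ℕ) (τ' : ℂ) : Ell τ' := ((1/(4*(n : ℂ)) : ℂ) : Ell τ')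

/-- r(z) = R(z) + (0, ..., 0, 1/(4n)). -/
def rmap (n : ℕ) (τ τ' : ℂ) : Aprime n τ τ' → Aprime n τ τ' :=
  fun z => ((Rmap n τ τ' z).1, (Rmap n τ τ' z).2 + cE' n τ')

/-- The translation vector b: b_{2i-1} = 1/2 + τ/2, b_{2i} = τ/2 (1-indexed),
i.e. in 0-indexed terms, even indices carry 1/2 + τ/2 and odd indices carry τ/2. -/
def bvec (n : ℕ) (τ : ℂ) : Fin (2*n) → Ell τ :=
  fun i => if i.val % 2 = 0 then ((1/2 + τ/2 : ℂ) : Ell τ) else ((τ/2 : ℂ) : Ell τ)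

/-- S(z₁,...,z_{2n},z_{2n+1}) = (-z_{2n}, -z_{2n-1}, ..., -z₁, -z_{2n+1}). -/
def Smap (n : ℕ) (τ τ' : ℂ) : Aprime n τ τ' → Aprime n τ τ' :=
  fun z => (fun i => -z.1 ⟨2*n-1-i.val, by have := i.isLt; omega⟩, -z.2)

/-- s(z) = S(z) + (b₁, ..., b_{2n}, 0). -/
def smap (n : ℕ) (τ τ' : ℂ) : Aprime n τ τ' → Aprime n τ τ' :=
  fun z => (fun i => -z.1 ⟨2*n-1-i.val, by have := i.isLt; omega⟩ + bvec n τ i, -z.2)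

namespace Stmt5Aux

lemma one_mem_Lam (τ : ℂ) : (1:ℂ) ∈ Lam τ :=
  AddSubgroup.subset_closure (by simp)

lemma mem_Lam {τ x : ℂ} (h : x ∈ Lam τ) : ∃ a b : ℤ, x = a + b * τ := by
  induction h using AddSubgroup.closure_induction with
  | mem y hy =>
    rcases hy with rfl | hy
    · exact ⟨1, 0, by simp⟩
    · rcases hy with rfl
      exact ⟨0, 1, by simp⟩
  | zero => exact ⟨0, 0, by simp⟩
  | add x y hx hy ihx ihy =>
    obtain ⟨a, b, rfl⟩ := ihx; obtain ⟨a', b', rfl⟩ := ihy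
    exact ⟨a + a', b + b', by push_cast; ring⟩
  | neg x hx ihx =>
    obtain ⟨a, b, rfl⟩ := ihx
    exact ⟨-a, -b, by push_cast; ring⟩

/-- A real number strictly between 0 and 1 is not in the lattice. -/
lemma not_mem_Lam {τ : ℂ} (hτ : τ.im ≠ 0) {x : ℝ} (h0 : 0 < x) (h1 : x < 1) :
    (x : ℂ) ∉ Lam τ := by
  intro h
  obtain ⟨a, b, hab⟩ := mem_Lam h
  have him : (x:ℂ).im = ((a:ℂ) + b * τ).im := by rw [hab]
  simp [Complex.add_im, Complex.mul_im] at him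
  rcases him with hb | hb
  · have hre : (x:ℂ).re = ((a:ℂ) + (b:ℂ) * τ).re := by rw [hab]
    rw [hb] at hre
    simp at hre
    have : (0:ℤ) < a := by exact_mod_cast (hre ▸ h0 : (0:ℝ) < (a:ℝ))
    have : (a:ℝ) < 1 := hre ▸ h1
    have : a < 1 := by exact_mod_cast this
    omega
  · exact absurd hb hτ

/-- The first-coordinate map of `Rmap`. -/
def Fm (n : ℕ) (τ : ℂ) : (Fin (2*n) → Ell τ) → (Fin (2*n) → Ell τ) :=
  fun v i => if i.val = 0 then -v ⟨2*n-1, by have := i.isLt; omega⟩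
    else v ⟨i.val - 1, by have := i.isLt; omega⟩

lemma rmap_eq (n : ℕ) (τ τ' : ℂ) (z : Aprime n τ τ') :
    rmap n τ τ' z = (Fm n τ z.1, z.2 + cE' n τ') := rfl

lemma rmap_iter (n : ℕ) (τ τ' : ℂ) (k : ℕ) (z : Aprime n τ τ') :
    (rmap n τ τ')^[k] z = ((Fm n τ)^[k] z.1, z.2 + k • cE' n τ') := by
  induction k with
  | zero => simp
  | succ k ih =>
    rw [Function.iterate_succ_apply', Function.iterate_succ_apply', ih, rmap_eq]
    simp [add_smul, add_assoc, succ_nsmul]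

lemma Fm_iter_eq (n : ℕ) (τ : ℂ) (k : ℕ) (v : Fin (2*n) → Ell τ) :
    ∀ i : Fin (2*n), k ≤ 2*n →
    (Fm n τ)^[k] v i =
      if h : i.val < k then -v ⟨i.val + 2*n - k, by have := i.isLt; omega⟩
      else v ⟨i.val - k, by have := i.isLt; omega⟩ := by
  induction k with
  | zero => intro i hk; simp
  | succ k ih =>
    intro i hk
    rw [Function.iterate_succ_apply', Fm]
    rcases eq_or_ne i.val 0 with hi | hi
    · rw [if_pos hi, ih _ (by omega)]
      have h2 : ¬ (2*n-1 < k) := by omega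
      rw [dif_neg h2, dif_pos (by omega)]
      congr 2
      simp only [Fin.mk.injEq]
      omega
    · rw [if_neg hi, ih _ (by omega)]
      rcases Nat.lt_or_ge (i.val - 1) k with h | h
      · rw [dif_pos h, dif_pos (by omega)]
        congr 2
        simp only [Fin.mk.injEq]
        omega
      · rw [dif_neg (show ¬((i:ℕ) - 1 < k) by omega), dif_neg (by omega)]
        congr 1
        simp only [Fin.mk.injEq]
        omega

lemma Fm_iter_two_n (n : ℕ) (τ : ℂ) (v : Fin (2*n) → Ell τ) :
    (Fm n τ)^[2*n] v = -v := by
  funext i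
  rw [Fm_iter_eq n τ (2*n) v i le_rfl, dif_pos i.isLt]
  simp only [Pi.neg_apply]
  have hidx : (⟨i.val + 2*n - (2*n), by have := i.isLt; omega⟩ : Fin (2*n)) = i := by
    apply Fin.ext
    simp
  rw [hidx]

lemma Fm_iter_four_n (n : ℕ) (τ : ℂ) (v : Fin (2*n) → Ell τ) :
    (Fm n τ)^[4*n] v = v := by
  have h4 : 4*n = 2*n + 2*n := by omega
  rw [h4, Function.iterate_add_apply, Fm_iter_two_n, Fm_iter_two_n, neg_neg]

lemma four_n_smul_cE' (n : ℕ) (hn : 1 ≤ n) (τ' : ℂ) : (4*n) • cE' n τ' = 0 := by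
  have : (4*n) • cE' n τ' = (((4*n : ℕ) * (1/(4*(n:ℂ))) : ℂ) : Ell τ') := by
    rw [cE', ← QuotientAddGroup.mk_nsmul]
    congr 1
    simp [nsmul_eq_mul]
  rw [this]
  have hne : (4*(n:ℂ)) ≠ 0 := by
    have : (n:ℂ) ≠ 0 := Nat.cast_ne_zero.mpr (by omega)
    simp [this]
  have : ((4*n : ℕ) * (1/(4*(n:ℂ))) : ℂ) = 1 := by
    push_cast
    field_simp
    exact div_self (by simpa using hne)
  rw [this]
  rw [QuotientAddGroup.eq_zero_iff]
  exact one_mem_Lam τ'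

lemma rmap_iter_four_n (n : ℕ) (hn : 1 ≤ n) (τ τ' : ℂ) (z : Aprime n τ τ') :
    (rmap n τ τ')^[4*n] z = z := by
  rw [rmap_iter, Fm_iter_four_n, four_n_smul_cE' n hn, add_zero]

lemma Rmap_add (n : ℕ) (τ τ' : ℂ) (z z' : Aprime n τ τ') :
    Rmap n τ τ' (z + z') = Rmap n τ τ' z + Rmap n τ τ' z' := by
  refine Prod.ext ?_ rfl
  funext i
  show _ = (Rmap n τ τ' z).1 i + (Rmap n τ τ' z').1 i
  simp only [Rmap, Prod.fst_add, Pi.add_apply]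
  split <;> abel

/-- `Rmap` as an additive hom. -/
def RmapHom (n : ℕ) (τ τ' : ℂ) : Aprime n τ τ' →+ Aprime n τ τ' :=
  AddMonoidHom.mk' (Rmap n τ τ') (Rmap_add n τ τ')

lemma Rmap_wpt (n : ℕ) (τ τ' : ℂ) : Rmap n τ τ' (wpt n τ τ') = wpt n τ τ' := by
  refine Prod.ext ?_ rfl
  funext i
  show _ = ((1/2 : ℂ) : Ell τ)
  simp only [Rmap, wpt]
  split
  · rw [← QuotientAddGroup.mk_neg, QuotientAddGroup.eq]
    have : -(-(1/2 : ℂ)) + 1/2 = 1 := by ring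
    rw [this]
    exact one_mem_Lam τ
  · rfl

lemma Rmap_mem_wsub {n : ℕ} {τ τ' : ℂ} {z : Aprime n τ τ'} (hz : z ∈ wsub n τ τ') :
    Rmap n τ τ' z ∈ wsub n τ τ' := by
  have hle : wsub n τ τ' ≤ (wsub n τ τ').comap (RmapHom n τ τ') := by
    rw [wsub, AddSubgroup.closure_le]
    intro x hx
    rcases hx with rfl
    show Rmap n τ τ' (wpt n τ τ') ∈ wsub n τ τ'
    rw [Rmap_wpt]
    exact AddSubgroup.subset_closure rfl
  exact hle hz

lemma snd_eq_zero_of_mem_wsub {n : ℕ} {τ τ' : ℂ} {z : Aprime n τ τ'}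
    (hz : z ∈ wsub n τ τ') : z.2 = 0 := by
  have hle : wsub n τ τ' ≤ (⊥ : AddSubgroup (Ell τ')).comap
      (AddMonoidHom.snd (Fin (2*n) → Ell τ) (Ell τ')) := by
    rw [wsub, AddSubgroup.closure_le]
    intro x hx
    rcases hx with rfl
    show wpt n τ τ' ∈ AddSubgroup.comap (AddMonoidHom.snd (Fin (2*n) → Ell τ) (Ell τ')) ⊥
    rw [AddSubgroup.mem_comap]
    simp [wpt]
  have h2 := AddSubgroup.mem_comap.mp (hle hz)
  simpa using h2

lemma rmap_sub (n : ℕ) (τ τ' : ℂ) (z z' : Aprime n τ τ') :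
    rmap n τ τ' z - rmap n τ τ' z' = Rmap n τ τ' (z - z') := by
  have h : ∀ y : Aprime n τ τ', rmap n τ τ' y = Rmap n τ τ' y + ((0 : Fin (2*n) → Ell τ), cE' n τ') := by
    intro y
    refine Prod.ext ?_ rfl
    simp [rmap]
  have hsub : Rmap n τ τ' (z - z') = Rmap n τ τ' z - Rmap n τ τ' z' :=
    map_sub (RmapHom n τ τ') z z'
  rw [h, h, hsub]
  abel

end Stmt5Aux

open Stmt5Aux

/-- r descends to a well-defined bijection of A = A'/⟨w⟩ of order exactly 4n. -/
theorem stmt_5 (n : ℕ) (hn : 1 ≤ n) (τ τ' : ℂ) (hτ : τ.im ≠ 0) (hτ' : τ'.im ≠ 0) :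
    (∀ z z' : Aprime n τ τ', z - z' ∈ wsub n τ τ' →
        rmap n τ τ' z - rmap n τ τ' z' ∈ wsub n τ τ') ∧
    ∃ rbar : Aq n τ τ' → Aq n τ τ',
      Function.Bijective rbar ∧
      (∀ z : Aprime n τ τ', rbar (z : Aq n τ τ') = ((rmap n τ τ' z : Aprime n τ τ') : Aq n τ τ')) ∧
      rbar^[4*n] = id ∧
      ∀ j : ℕ, 0 < j → j < 4*n → rbar^[j] ≠ id := by
  classical
  have hwd : ∀ z z' : Aprime n τ τ', z - z' ∈ wsub n τ τ' →
      rmap n τ τ' z - rmap n τ τ' z' ∈ wsub n τ τ' := by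
    intro z z' h
    rw [rmap_sub]
    exact Rmap_mem_wsub h
  refine ⟨hwd, ?_⟩
  have key : ∀ a b : Aprime n τ τ', (a : Aq n τ τ') = b →
      ((rmap n τ τ' a : Aprime n τ τ') : Aq n τ τ') = ((rmap n τ τ' b : Aprime n τ τ') : Aq n τ τ') := by
    intro a b hab
    rw [QuotientAddGroup.eq_iff_sub_mem] at hab ⊢
    exact hwd a b hab
  set rbar : Aq n τ τ' → Aq n τ τ' := fun q =>
    Quotient.liftOn' q (fun z => ((rmap n τ τ' z : Aprime n τ τ') : Aq n τ τ'))
      (fun a b hab => key a b (Quotient.sound' hab)) with hrbar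
  have hcomm : ∀ z : Aprime n τ τ',
      rbar (z : Aq n τ τ') = ((rmap n τ τ' z : Aprime n τ τ') : Aq n τ τ') := fun z => rfl
  have hiter : ∀ (k : ℕ) (z : Aprime n τ τ'),
      rbar^[k] (z : Aq n τ τ') = (((rmap n τ τ')^[k] z : Aprime n τ τ') : Aq n τ τ') := by
    intro k
    induction k with
    | zero => intro z; simp
    | succ k ih =>
      intro z
      rw [Function.iterate_succ_apply, Function.iterate_succ_apply, hcomm, ih]
  have h4n : rbar^[4*n] = id := by
    funext q
    obtain ⟨z, rfl⟩ := QuotientAddGroup.mk_surjective q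
    rw [hiter, rmap_iter_four_n n hn]
    rfl
  have hk : 4*n = (4*n-1) + 1 := by omega
  have hA : rbar ∘ rbar^[4*n-1] = id := by
    have h := h4n
    rw [hk, Function.iterate_succ'] at h
    exact h
  have hB : rbar^[4*n-1] ∘ rbar = id := by
    have h := h4n
    rw [hk, Function.iterate_succ] at h
    exact h
  have hbij : Function.Bijective rbar := by
    refine Function.bijective_iff_has_inverse.mpr ⟨rbar^[4*n-1], ?_, ?_⟩
    · intro x; exact congrFun hB x
    · intro x; exact congrFun hA x
  refine ⟨rbar, hbij, hcomm, h4n, ?_⟩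
  intro j hj0 hj4 hid
  have hFm0 : Fm n τ (0 : Fin (2*n) → Ell τ) = 0 := by
    funext i
    simp only [Fm, Pi.zero_apply]
    split <;> simp
  have hz := congrFun hid ((0 : Aprime n τ τ') : Aq n τ τ')
  rw [hiter, rmap_iter] at hz
  have h0 : (0 : Aprime n τ τ').1 = 0 := rfl
  have h02 : (0 : Aprime n τ τ').2 = 0 := rfl
  rw [h0, h02, Function.iterate_fixed hFm0 j, zero_add] at hz
  -- hz : mk (0, j • cE') = mk 0
  rw [id_eq, QuotientAddGroup.eq_iff_sub_mem, sub_zero] at hz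
  have hsnd := snd_eq_zero_of_mem_wsub hz
  have hsnd' : ((j : ℕ) • (1/(4*(n:ℂ)) : ℂ) : ℂ) ∈ Lam τ' := by
    have : j • cE' n τ' = ((j • (1/(4*(n:ℂ)) : ℂ) : ℂ) : Ell τ') := by
      rw [cE', ← QuotientAddGroup.mk_nsmul]
    rw [this, QuotientAddGroup.eq_zero_iff] at hsnd
    exact hsnd
  have hnr : (0:ℝ) < (n:ℝ) := by exact_mod_cast (by omega : 0 < n)
  have hcast : ((j : ℕ) • (1/(4*(n:ℂ)) : ℂ) : ℂ) = (((j:ℝ)/(4*(n:ℝ)) : ℝ) : ℂ) := by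
    rw [nsmul_eq_mul]
    push_cast
    field_simp
  rw [hcast] at hsnd'
  refine not_mem_Lam hτ' ?_ ?_ hsnd'
  · positivity
  · rw [div_lt_one (by positivity)]
    exact_mod_cast hj4
end
end

section
/- For every integer j with 0 < j < 4n, the induced map r̄^j on A = A'/⟨w⟩ has no fixed points; equivalently, for every z ∈ A', the element r^j(z) - z of A' does not lie in the subgroup {0, w} generated by w. -/
noncomputable section

lemma iter_snd (n : ℕ) (τ τ' : ℂ) (j : ℕ) (z : Aprime n τ τ') :
    ((rmap n τ τ')^[j] z).2 = z.2 + j • cE' n τ' := by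
  induction j with
  | zero => simp
  | succ k ih =>
    rw [Function.iterate_succ_apply', rmap]
    simp only [Rmap]
    rw [ih, succ_nsmul, add_assoc]

/-- for 0 < j < 4n, r̄^j has no fixed points on A; equivalently
r^j(z) - z never lies in the subgroup generated by w. -/
theorem stmt_6 (n : ℕ) (hn : 1 ≤ n) (τ τ' : ℂ) (hτ : τ.im ≠ 0) (hτ' : τ'.im ≠ 0) :
    ∀ j : ℕ, 0 < j → j < 4*n →
      (∀ z : Aprime n τ τ', (rmap n τ τ')^[j] z - z ∉ wsub n τ τ') ∧
      (∀ rbar : Aq n τ τ' → Aq n τ τ',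
        (∀ z : Aprime n τ τ',
          rbar (z : Aq n τ τ') = ((rmap n τ τ' z : Aprime n τ τ') : Aq n τ τ')) →
        ∀ x : Aq n τ τ', rbar^[j] x ≠ x) := by
  intro j hj hj'
  have hne : (rmap n τ τ')^[j] 0 - 0 ∉ wsub n τ τ' ∧
      ∀ z : Aprime n τ τ', (rmap n τ τ')^[j] z - z ∉ wsub n τ τ' := by
    have key : ∀ z : Aprime n τ τ', (rmap n τ τ')^[j] z - z ∉ wsub n τ τ' := by
      intro z hmem
      rw [wsub, AddSubgroup.mem_closure_singleton] at hmem
      obtain ⟨k, hk⟩ := hmem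
      have h2 : ((rmap n τ τ')^[j] z - z).2 = 0 := by
        rw [← hk]; simp [wpt]
      rw [Prod.snd_sub, iter_snd] at h2
      have h3 : (j : ℕ) • cE' n τ' = 0 := by
        rw [add_sub_cancel_left] at h2; exact h2
      -- j • cE' = class of j/(4n)
      have h4 : (j : ℕ) • cE' n τ' = (((j : ℂ) / (4*(n:ℂ)) : ℂ) : Ell τ') := by
        rw [cE', ← QuotientAddGroup.mk_nsmul]
        congr 1
        push_cast
        ring
      rw [h4, QuotientAddGroup.eq_zero_iff, Lam, AddSubgroup.mem_closure_pair] at h3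
      obtain ⟨a, b, hab⟩ := h3
      have hnC : (4*(n:ℂ)) ≠ 0 := by
        simp only [ne_eq, mul_eq_zero, Nat.cast_eq_zero]
        push_neg; exact ⟨by norm_num, by omega⟩
      have him : ((b : ℤ) : ℝ) * τ'.im = 0 := by
        have := congrArg Complex.im hab
        simpa [Complex.div_im, Complex.add_im, Complex.mul_im] using this.symm
      have hb : b = 0 := by
        rcases mul_eq_zero.mp him with h | h
        · exact_mod_cast h
        · exact absurd h hτ'
      subst hb
      simp only [zsmul_eq_mul, smul_eq_mul, Int.cast_zero, zero_mul, add_zero, mul_one] at hab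
      have hC : (a : ℂ) * (4*(n:ℂ)) = (j : ℂ) := by
        field_simp at hab
        have hn0 : (n:ℂ) ≠ 0 := by exact_mod_cast (show n ≠ 0 by omega)
        rw [eq_div_iff hn0] at hab
        linear_combination hab
      have hZ : a * (4*(n:ℤ)) = (j : ℤ) := by exact_mod_cast hC
      have h1 : (0:ℤ) < j := by exact_mod_cast hj
      have h2 : (j:ℤ) < 4*(n:ℤ) := by exact_mod_cast hj'
      have hnpos : (0:ℤ) < 4*(n:ℤ) := by positivity
      have ha : 0 < a := by
        by_contra h
        push_neg at h
        nlinarith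
      nlinarith [(a-1)*(4*(n:ℤ))]
    exact ⟨key 0, key⟩
  refine ⟨hne.2, ?_⟩
  intro rbar hrbar x hfix
  obtain ⟨z, rfl⟩ := QuotientAddGroup.mk_surjective x
  have hiter : ∀ m : ℕ, rbar^[m] (z : Aq n τ τ') = (((rmap n τ τ')^[m] z : Aprime n τ τ') : Aq n τ τ') := by
    intro m
    induction m with
    | zero => rfl
    | succ k ih =>
      rw [Function.iterate_succ_apply', ih, hrbar, Function.iterate_succ_apply']
  rw [hiter] at hfix
  exact hne.2 z ((QuotientAddGroup.eq_iff_sub_mem ..).mp hfix)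
end
end

section
/- For every integer j with 0 < j < 4n, the induced map r̄^j on A = A'/⟨w⟩ is not a translation: there is no element a ∈ A such that r̄^j(x) = x + a for all x ∈ A. -/
noncomputable section

section Stmt7Aux

lemma mem_Lam {τ x : ℂ} (h : x ∈ Lam τ) : ∃ a b : ℤ, x = a + b * τ := by
  induction h using AddSubgroup.closure_induction with
  | mem y hy =>
    rcases hy with h | h <;> subst h
    · exact ⟨1, 0, by push_cast; ring⟩
    · exact ⟨0, 1, by push_cast; ring⟩
  | zero => exact ⟨0, 0, by push_cast; ring⟩
  | add x y _ _ hx hy =>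
    obtain ⟨a, b, rfl⟩ := hx; obtain ⟨c, d, rfl⟩ := hy
    exact ⟨a + c, b + d, by push_cast; ring⟩
  | neg x _ hx =>
    obtain ⟨a, b, rfl⟩ := hx
    exact ⟨-a, -b, by push_cast; ring⟩

lemma no_half (τ : ℂ) (hτ : τ.im ≠ 0) (k m : ℤ) (hm : m = 2 ∨ m = 4)
    (h : ((k:ℂ)/2 + (m:ℂ)/6) ∈ Lam τ) : False := by
  obtain ⟨a, b, hab⟩ := mem_Lam h
  have him : ((k:ℂ)/2 + (m:ℂ)/6).im = ((a:ℂ) + (b:ℂ) * τ).im := by rw [hab]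
  simp [Complex.add_im, Complex.mul_im, Complex.div_im] at him
  have hb : b = 0 := by
    rcases him with h | h
    · exact_mod_cast h
    · exact absurd h hτ
  subst hb
  simp at hab
  have h6 : (3 * k + m : ℂ) = (6 * a : ℂ) := by linear_combination 6 * hab
  have : (3 * k + m : ℤ) = (6 * a : ℤ) := by exact_mod_cast h6
  omega

lemma Rmap_sub (n : ℕ) (τ τ' : ℂ) (z z' : Aprime n τ τ') :
    Rmap n τ τ' (z - z') = Rmap n τ τ' z - Rmap n τ τ' z' := by
  unfold Rmap
  refine Prod.ext ?_ rfl
  funext i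
  by_cases h : i.val = 0 <;> simp [h] <;> abel

lemma rmap_iter_sub (n : ℕ) (τ τ' : ℂ) (j : ℕ) (z z' : Aprime n τ τ') :
    (rmap n τ τ')^[j] z - (rmap n τ τ')^[j] z' = (Rmap n τ τ')^[j] (z - z') := by
  induction j generalizing z z' with
  | zero => simp
  | succ j ih =>
    rw [Function.iterate_succ_apply', Function.iterate_succ_apply',
      Function.iterate_succ_apply']
    have h2 : rmap n τ τ' ((rmap n τ τ')^[j] z) - rmap n τ τ' ((rmap n τ τ')^[j] z')
        = Rmap n τ τ' ((rmap n τ τ')^[j] z - (rmap n τ τ')^[j] z') := by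
      rw [Rmap_sub]
      unfold rmap
      refine Prod.ext rfl ?_
      simp
    rw [h2, ih]

/-- the test point: (1/3, 0, ..., 0; 0) -/
def zpt (n : ℕ) (τ τ' : ℂ) : Aprime n τ τ' :=
  (fun i => if i.val = 0 then ((1/3 : ℂ) : Ell τ) else 0, 0)

lemma Rmap_iter_zpt (n : ℕ) (hn : 1 ≤ n) (τ τ' : ℂ) :
    ∀ j, j < 4*n → (Rmap n τ τ')^[j] (zpt n τ τ') =
      (fun i : Fin (2*n) => if j < 2*n then (if i.val = j then ((1/3 : ℂ) : Ell τ) else 0)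
        else (if i.val + 2*n = j then -((1/3 : ℂ) : Ell τ) else 0), 0) := by
  intro j
  induction j with
  | zero =>
    intro _
    simp only [Function.iterate_zero, id_eq, zpt]
    refine Prod.ext ?_ rfl
    funext i
    have h2 : 0 < 2*n := by omega
    by_cases h : i.val = 0 <;> simp [h, h2]
  | succ j ih =>
    intro hj
    rw [Function.iterate_succ_apply', ih (by omega)]
    unfold Rmap
    refine Prod.ext ?_ rfl
    funext i
    have hi := i.isLt
    simp only
    by_cases h0 : i.val = 0
    · rw [if_pos h0]
      split_ifs <;> first | rfl | omega | (exfalso; omega) | simp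
    · rw [if_neg h0]
      split_ifs <;> first | rfl | omega | (exfalso; omega) | simp

end Stmt7Aux

/-- for 0 < j < 4n, r̄^j is not a translation of A. -/
theorem stmt_7 (n : ℕ) (hn : 1 ≤ n) (τ τ' : ℂ) (hτ : τ.im ≠ 0) (hτ' : τ'.im ≠ 0) :
    ∀ rbar : Aq n τ τ' → Aq n τ τ',
      (∀ z : Aprime n τ τ',
        rbar (z : Aq n τ τ') = ((rmap n τ τ' z : Aprime n τ τ') : Aq n τ τ')) →
      ∀ j : ℕ, 0 < j → j < 4*n →
        ¬ ∃ a : Aq n τ τ', ∀ x : Aq n τ τ', rbar^[j] x = x + a := by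
  
  intro rbar hcomp j hj0 hj4 hEx
  obtain ⟨a, ha⟩ := hEx
  have hA : ∀ (m : ℕ) (z : Aprime n τ τ'),
      rbar^[m] ((z : Aprime n τ τ') : Aq n τ τ')
        = (((rmap n τ τ')^[m] z : Aprime n τ τ') : Aq n τ τ') := by
    intro m
    induction m with
    | zero => intro z; simp
    | succ m ih =>
      intro z
      rw [Function.iterate_succ_apply', Function.iterate_succ_apply', ih, hcomp]
  have key : ((rmap n τ τ')^[j] (zpt n τ τ') - (rmap n τ τ')^[j] 0 - zpt n τ τ')
      ∈ wsub n τ τ' := by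
    have h1 := ha ((zpt n τ τ' : Aprime n τ τ') : Aq n τ τ')
    have h2 := ha (((0 : Aprime n τ τ') : Aprime n τ τ') : Aq n τ τ')
    rw [hA] at h1 h2
    have h3 : ((((rmap n τ τ')^[j] (zpt n τ τ') - (rmap n τ τ')^[j] 0 - zpt n τ τ')
        : Aprime n τ τ') : Aq n τ τ') = 0 := by
      rw [QuotientAddGroup.mk_sub, QuotientAddGroup.mk_sub, h1, h2]
      rw [QuotientAddGroup.mk_zero]
      abel
    exact (QuotientAddGroup.eq_zero_iff _).mp h3
  rw [rmap_iter_sub, sub_zero, Rmap_iter_zpt n hn τ τ' j hj4] at key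
  rw [wsub, AddSubgroup.mem_closure_singleton] at key
  obtain ⟨k, hk⟩ := key
  have hc := congrArg (fun p : Aprime n τ τ' => p.1 ⟨0, by omega⟩) hk
  simp only [wpt, zpt, Prod.smul_fst, Pi.smul_apply, Prod.fst_sub, Pi.sub_apply, eq_self_iff_true, if_true] at hc
  -- hc : k • ((1/2 : ℂ) : Ell τ) = (if ...) - ((1/3 : ℂ) : Ell τ)
  have hsm : (k : ℤ) • (((1/2 : ℂ)) : Ell τ) = (((k : ℂ)/2 : ℂ) : Ell τ) := by
    have : ((k : ℤ) • ((1/2 : ℂ)) : ℂ) = ((k : ℂ)/2 : ℂ) := by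
      rw [zsmul_eq_mul]; push_cast; ring
    rw [← this]; rfl
  rw [hsm] at hc
  by_cases hcase : j = 2*n
  · subst hcase
    rw [if_neg (by omega), if_pos (by omega)] at hc
    -- hc : mk (k/2) = -mk (1/3) - mk (1/3)
    have hc2 : (((k : ℂ)/2 : ℂ) : Ell τ) = (((-2/3 : ℂ)) : Ell τ) := by
      rw [hc]
      rw [← QuotientAddGroup.mk_neg, ← QuotientAddGroup.mk_sub]
      norm_num
    rw [QuotientAddGroup.eq] at hc2
    have hmem : ((k:ℂ)/2 + (4:ℤ)/6) ∈ Lam τ := by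
      have heq : (-((k:ℂ)/2) + (-2/3) : ℂ) = -((k:ℂ)/2 + ((4:ℤ):ℂ)/6) := by
        push_cast; ring
      have := (Lam τ).neg_mem hc2
      rw [heq, neg_neg] at this
      exact this
    exact no_half τ hτ k 4 (Or.inr rfl) hmem
  · have hfix : (if j < 2*n then (if (0:ℕ) = j then ((1/3 : ℂ) : Ell τ) else 0)
        else (if 0 + 2*n = j then -((1/3 : ℂ) : Ell τ) else 0)) = 0 := by
      split_ifs <;> first | rfl | omega | (exfalso; omega)
    rw [hfix, zero_sub] at hc
    have hc2 : (((k : ℂ)/2 : ℂ) : Ell τ) = (((-1/3 : ℂ)) : Ell τ) := by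
      rw [hc, ← QuotientAddGroup.mk_neg]
      norm_num
    rw [QuotientAddGroup.eq] at hc2
    have hmem : ((k:ℂ)/2 + (2:ℤ)/6) ∈ Lam τ := by
      have heq : (-((k:ℂ)/2) + (-1/3) : ℂ) = -((k:ℂ)/2 + ((2:ℤ):ℂ)/6) := by
        push_cast; ring
      have := (Lam τ).neg_mem hc2
      rw [heq, neg_neg] at this
      exact this
    exact no_half τ hτ k 2 (Or.inl rfl) hmem
end
end

section
/- The affine map s of A' defined by s(z_1, ..., z_{2n}, z_{2n+1}) = (-z_{2n} + b_1, -z_{2n-1} + b_2, ..., -z_1 + b_{2n}, -z_{2n+1}) descends to a well-defined bijection s̄ of the quotient A = A'/⟨w⟩, and s̄ has order exactly 2: s̄ ∘ s̄ = id and s̄ ≠ id. -/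
noncomputable section

/-- auxiliary: elements of Lam τ are integer combinations -/
lemma lam_mem_span (τ : ℂ) {x : ℂ} (hx : x ∈ Lam τ) : ∃ a b : ℤ, x = a + b*τ := by
  let K : AddSubgroup ℂ :=
    { carrier := {x | ∃ a b : ℤ, x = a + b*τ}
      zero_mem' := ⟨0, 0, by simp⟩
      add_mem' := by rintro x y ⟨a, b, rfl⟩ ⟨c, d, rfl⟩; exact ⟨a+c, b+d, by push_cast; ring⟩
      neg_mem' := by rintro x ⟨a, b, rfl⟩; exact ⟨-a, -b, by push_cast; ring⟩ }
  have h : Lam τ ≤ K := by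
    rw [Lam, AddSubgroup.closure_le]
    rintro y (rfl | rfl)
    · exact ⟨1, 0, by push_cast; ring⟩
    · exact ⟨0, 1, by push_cast; ring⟩
  exact h hx

lemma one_mem_lam (τ : ℂ) : (1 : ℂ) ∈ Lam τ :=
  AddSubgroup.subset_closure (by simp)

lemma ell_eq (τ : ℂ) {a b : ℂ} (h : a - b ∈ Lam τ) : ((a : ℂ) : Ell τ) = ((b : ℂ) : Ell τ) := by
  rw [QuotientAddGroup.eq]
  have : -a + b = -(a - b) := by ring
  rw [this]
  exact (Lam τ).neg_mem h

lemma half_eq_neg_half (τ : ℂ) : ((-(1/2) : ℂ) : Ell τ) = (((1/2) : ℂ) : Ell τ) := by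
  apply ell_eq
  have : (-(1/2) : ℂ) - 1/2 = -1 := by ring
  rw [this]
  exact (Lam τ).neg_mem (one_mem_lam τ)


lemma bvec_sub (n : ℕ) (τ : ℂ) (i j : Fin (2*n)) (h : i.val % 2 ≠ j.val % 2) :
    bvec n τ i - bvec n τ j = (((1/2 : ℂ)) : Ell τ) := by
  have key : ∀ x y : ℂ, ((x : ℂ) : Ell τ) - ((y : ℂ) : Ell τ) = ((x - y : ℂ) : Ell τ) := by
    intro x y; rw [← QuotientAddGroup.mk_sub]
  rcases Nat.even_or_odd i.val with he | ho
  · have h0 : i.val % 2 = 0 := Nat.even_iff.mp he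
    have h1 : j.val % 2 = 1 := by omega
    simp only [bvec, h0, h1, if_true, if_false]
    norm_num
  · have h1 : i.val % 2 = 1 := Nat.odd_iff.mp ho
    have h0 : j.val % 2 = 0 := by omega
    simp only [bvec, h0, h1, if_true, if_false]
    norm_num
    rw [← QuotientAddGroup.mk_neg]
    exact half_eq_neg_half τ

/-- s descends to a well-defined bijection s̄ of A = A'/⟨w⟩ of order exactly 2. -/
theorem stmt_10 (n : ℕ) (hn : 1 ≤ n) (τ τ' : ℂ) (hτ : τ.im ≠ 0) (hτ' : τ'.im ≠ 0) :
    (∀ z z' : Aprime n τ τ', z - z' ∈ wsub n τ τ' →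
        smap n τ τ' z - smap n τ τ' z' ∈ wsub n τ τ') ∧
    ∃ sbar : Aq n τ τ' → Aq n τ τ',
      Function.Bijective sbar ∧
      (∀ z : Aprime n τ τ', sbar (z : Aq n τ τ') = ((smap n τ τ' z : Aprime n τ τ') : Aq n τ τ')) ∧
      sbar ∘ sbar = id ∧ sbar ≠ id := by
  -- Step 1: descent condition
  have step1 : ∀ z z' : Aprime n τ τ', z - z' ∈ wsub n τ τ' →
      smap n τ τ' z - smap n τ τ' z' ∈ wsub n τ τ' := by
    intro z z' hzz
    rw [wsub, AddSubgroup.mem_closure_singleton] at hzz ⊢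
    obtain ⟨k, hk⟩ := hzz
    refine ⟨-k, ?_⟩
    have h1 : ∀ i, z.1 i - z'.1 i = k • (((1/2 : ℂ) : Ell τ)) := by
      intro i
      have := congrFun (congrArg Prod.fst hk) i
      simpa [wpt] using this.symm
    ext i
    · simp only [smap, Prod.fst_sub, Prod.smul_fst, wpt, Pi.sub_apply, Pi.smul_apply]
      have := h1 ⟨2*n-1-i.val, by have := i.isLt; omega⟩
      rw [show (-z.1 ⟨2*n-1-i.val, by have := i.isLt; omega⟩ + bvec n τ i) -
          (-z'.1 ⟨2*n-1-i.val, by have := i.isLt; omega⟩ + bvec n τ i)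
          = -(z.1 ⟨2*n-1-i.val, by have := i.isLt; omega⟩ -
              z'.1 ⟨2*n-1-i.val, by have := i.isLt; omega⟩) by abel, this]
      rw [neg_smul]
    · have h2 : z.2 - z'.2 = 0 := by
        have := congrArg Prod.snd hk
        simpa [wpt] using this.symm
      simp [smap, wpt, h2, show -z.2 - -z'.2 = -(z.2 - z'.2) by abel]
  refine ⟨step1, ?_⟩
  -- define sbar
  let sbar : Aq n τ τ' → Aq n τ τ' := fun q =>
    Quotient.liftOn' q (fun z => ((smap n τ τ' z : Aprime n τ τ') : Aq n τ τ'))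
      (by
        intro a b hab
        have hab' : a - b ∈ wsub n τ τ' := by
          rw [QuotientAddGroup.leftRel_apply] at hab
          have : a - b = -(-a + b) := by abel
          rw [this]
          exact (wsub n τ τ').neg_mem hab
        have := step1 a b hab'
        rw [QuotientAddGroup.eq]
        have h : -(smap n τ τ' a) + smap n τ τ' b = -(smap n τ τ' a - smap n τ τ' b) := by abel
        rw [h]
        exact (wsub n τ τ').neg_mem this)
  have hmk : ∀ z : Aprime n τ τ', sbar (z : Aq n τ τ') = ((smap n τ τ' z : Aprime n τ τ') : Aq n τ τ') :=
    fun z => rfl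
  -- s ∘ s shifts by w
  have hss : ∀ z : Aprime n τ τ', smap n τ τ' (smap n τ τ' z) - z = wpt n τ τ' := by
    intro z
    ext i
    · simp only [smap, Prod.fst_sub, Pi.sub_apply, wpt]
      have hi := i.isLt
      have hidx : (⟨2*n-1-(2*n-1-i.val), by omega⟩ : Fin (2*n)) = i := by
        apply Fin.ext; simp; omega
      rw [hidx]
      have key := bvec_sub n τ i ⟨2*n-1-i.val, by omega⟩ (by show i.val % 2 ≠ (2*n-1-i.val) % 2; omega)
      rw [← key]
      abel
    · simp [smap, wpt]
  have hcomp : sbar ∘ sbar = id := by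
    funext q
    induction q using Quotient.inductionOn' with
    | h z =>
      simp only [Function.comp_apply, id_eq]
      have e1 : (Quotient.mk'' z : Aq n τ τ') = ((z : Aprime n τ τ') : Aq n τ τ') := rfl
      rw [e1, hmk, hmk]
      rw [QuotientAddGroup.eq]
      rw [wsub, AddSubgroup.mem_closure_singleton]
      refine ⟨-1, ?_⟩
      rw [show ((-1 : ℤ) • wpt n τ τ') = -(wpt n τ τ') by simp, ← hss z]
      abel
  have hinv : Function.Involutive sbar := fun x => congrFun hcomp x
  have hne : sbar ≠ id := by
    intro h
    have h0 : sbar ((0 : Aprime n τ τ') : Aq n τ τ') = ((0 : Aprime n τ τ') : Aq n τ τ') := by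
      rw [h]; rfl
    rw [hmk, QuotientAddGroup.eq] at h0
    rw [show -(smap n τ τ' 0) + 0 = -(smap n τ τ' 0 - 0) by abel] at h0
    have h0' := (wsub n τ τ').neg_mem h0
    rw [neg_neg, wsub, AddSubgroup.mem_closure_singleton] at h0'
    obtain ⟨k, hk⟩ := h0'
    have hlt : (1 : ℕ) < 2*n := by omega
    have hc := congrFun (congrArg Prod.fst hk) ⟨1, hlt⟩
    simp only [wpt, smap, Prod.smul_fst, Pi.smul_apply, Prod.fst_sub, Pi.sub_apply] at hc
    -- hc : k • (1/2 : Ell τ) = -0 + bvec n τ ⟨1,_⟩ - 0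
    have hb : bvec n τ ⟨1, hlt⟩ = ((τ/2 : ℂ) : Ell τ) := by simp [bvec]
    rw [hb] at hc
    have hc' : (((k : ℂ) * (1/2) : ℂ) : Ell τ) = ((τ/2 : ℂ) : Ell τ) := by
      rw [show (((k : ℂ) * (1/2) : ℂ) : Ell τ) = k • (((1/2 : ℂ)) : Ell τ) by
        rw [← QuotientAddGroup.mk_zsmul]; norm_num [zsmul_eq_mul]]
      rw [hc]; simp
    rw [QuotientAddGroup.eq] at hc'
    have hmem : (τ/2 - (k : ℂ) * (1/2) : ℂ) ∈ Lam τ := by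
      have : (-(((k : ℂ) * (1/2))) + τ/2 : ℂ) = τ/2 - (k : ℂ) * (1/2) := by ring
      rwa [this] at hc'
    obtain ⟨a, b, hab⟩ := lam_mem_span τ hmem
    have him := congrArg Complex.im hab
    simp [Complex.add_im, Complex.mul_im, Complex.sub_im, Complex.div_im] at him
    have h2 : (2*(b:ℝ) - 1) * τ.im = 0 := by linarith
    rcases mul_eq_zero.mp h2 with h3 | h3
    · have h4 : ((2*b : ℤ) : ℝ) = ((1:ℤ):ℝ) := by push_cast; linarith
      have := Int.cast_injective h4
      omega
    · exact hτ h3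
  exact ⟨sbar, hinv.bijective, hmk, hcomp, hne⟩
end
end

section
/- The map r̄ ∘ s̄ induced on A = A'/⟨w⟩ by the composite rs has no fixed points; equivalently, for every z ∈ A', the element (rs)(z) - z of A' does not lie in the subgroup {0, w} generated by w. -/
noncomputable section

/-- r̄ ∘ s̄ has no fixed points on A; equivalently (rs)(z) - z never lies
in the subgroup generated by w. -/
theorem stmt_12 (n : ℕ) (hn : 1 ≤ n) (τ τ' : ℂ) (hτ : τ.im ≠ 0) (hτ' : τ'.im ≠ 0) :
    (∀ z : Aprime n τ τ', rmap n τ τ' (smap n τ τ' z) - z ∉ wsub n τ τ') ∧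
    (∀ rbar sbar : Aq n τ τ' → Aq n τ τ',
      (∀ z : Aprime n τ τ',
        rbar (z : Aq n τ τ') = ((rmap n τ τ' z : Aprime n τ τ') : Aq n τ τ')) →
      (∀ z : Aprime n τ τ',
        sbar (z : Aq n τ τ') = ((smap n τ τ' z : Aprime n τ τ') : Aq n τ τ')) →
      ∀ x : Aq n τ τ', rbar (sbar x) ≠ x) := by
  have h0 : (0 : ℕ) < 2 * n := by omega
  have key : ∀ z : Aprime n τ τ', rmap n τ τ' (smap n τ τ' z) - z ∉ wsub n τ τ' := by
    intro z hmem
    rw [wsub, AddSubgroup.mem_closure_singleton] at hmem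
    obtain ⟨k, hk⟩ := hmem
    -- compare first coordinates at index 0
    have h1 : (k • wpt n τ τ').1 ⟨0, h0⟩ = (rmap n τ τ' (smap n τ τ' z) - z).1 ⟨0, h0⟩ := by
      rw [hk]
    have hb : bvec n τ ⟨2*n-1, by omega⟩ = ((τ/2 : ℂ) : Ell τ) := by
      have : (2*n-1) % 2 = 1 := by omega
      simp [bvec, this]
    have hsub : (2*n-1) - (2*n-1) = 0 := by omega
    have hrs : (rmap n τ τ' (smap n τ τ' z)).1 ⟨0, h0⟩
        = z.1 ⟨0, h0⟩ - ((τ/2 : ℂ) : Ell τ) := by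
      show (Rmap n τ τ' (smap n τ τ' z)).1 ⟨0, h0⟩ = _
      simp only [Rmap, smap]
      rw [if_pos trivial]
      simp only [hsub]
      rw [hb]
      abel
    have hw : (k • wpt n τ τ').1 ⟨0, h0⟩ = k • (((1/2 : ℂ) : Ell τ)) := rfl
    rw [hw] at h1
    have h2 : (k • (((1/2 : ℂ) : Ell τ)) : Ell τ)
        = ((((k : ℂ) * (1/2) : ℂ)) : Ell τ) := by
      rw [← QuotientAddGroup.mk_zsmul]
      norm_num
    have h3 : (rmap n τ τ' (smap n τ τ' z) - z).1 ⟨0, h0⟩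
        = ((-(τ/2) : ℂ) : Ell τ) := by
      show (rmap n τ τ' (smap n τ τ' z)).1 ⟨0, h0⟩ - z.1 ⟨0, h0⟩ = _
      rw [hrs]
      rw [show ((-(τ/2) : ℂ) : Ell τ) = -(((τ/2 : ℂ)) : Ell τ) from
        (QuotientAddGroup.mk_neg _ _)]
      abel
    rw [h2, h3] at h1
    rw [QuotientAddGroup.eq_iff_sub_mem] at h1
    rw [Lam, AddSubgroup.mem_closure_pair] at h1
    obtain ⟨m, l, hml⟩ := h1
    have him' : (l : ℝ) * τ.im = τ.im / 2 := by
      have : ((m : ℤ) • (1:ℂ) + (l:ℤ) • τ).im = ((k : ℂ) * (1/2) - -(τ/2)).im := by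
        rw [hml]
      simpa [Complex.add_im, Complex.sub_im, Complex.neg_im, Complex.div_im,
        Complex.mul_im, Complex.intCast_im, Complex.intCast_re, Complex.ofReal_im,
        zsmul_eq_mul] using this
    have h2l : (2 * (l : ℝ) - 1) * τ.im = 0 := by linear_combination 2 * him'
    have h2l' : (2 * (l : ℝ) - 1) = 0 := by
      rcases mul_eq_zero.mp h2l with h | h
      · exact h
      · exact absurd h hτ
    have : (2 * l : ℤ) = 1 := by
      have : (2 * (l : ℝ)) = 1 := by linarith
      exact_mod_cast this
    omega
  refine ⟨key, ?_⟩
  intro rbar sbar hr hs x hx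
  obtain ⟨z, rfl⟩ := QuotientAddGroup.mk_surjective x
  rw [hs z, hr (smap n τ τ' z)] at hx
  rw [QuotientAddGroup.eq_iff_sub_mem] at hx
  exact key z hx
end
end

section
/- The map s̄ induced on A = A'/⟨w⟩ by s has no fixed points; equivalently, for every z ∈ A', the element s(z) - z of A' does not lie in the subgroup {0, w} generated by w. -/
noncomputable section

lemma half_not_mem (τ : ℂ) (hτ : τ.im ≠ 0) : (1/2 : ℂ) ∉ Lam τ := by
  rw [Lam, AddSubgroup.mem_closure_pair]
  rintro ⟨m, k, h⟩
  have him := congrArg Complex.im h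
  have hre := congrArg Complex.re h
  simp [Complex.add_im, Complex.add_re] at him hre
  rcases him with h1 | h2
  · rw [h1] at hre
    simp at hre
    have : (2:ℝ) * m = 1 := by linarith
    have h2 : ((2 * m : ℤ) : ℝ) = ((1:ℤ):ℝ) := by push_cast; linarith
    have := Int.cast_injective h2
    omega
  · exact absurd h2 hτ

/-- s̄ has no fixed points on A; equivalently s(z) - z never lies in the
subgroup generated by w. -/
theorem stmt_13 (n : ℕ) (hn : 1 ≤ n) (τ τ' : ℂ) (hτ : τ.im ≠ 0) (hτ' : τ'.im ≠ 0) :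
    (∀ z : Aprime n τ τ', smap n τ τ' z - z ∉ wsub n τ τ') ∧
    (∀ sbar : Aq n τ τ' → Aq n τ τ',
      (∀ z : Aprime n τ τ',
        sbar (z : Aq n τ τ') = ((smap n τ τ' z : Aprime n τ τ') : Aq n τ τ')) →
      ∀ x : Aq n τ τ', sbar x ≠ x) := by
  have key1 : ∀ z : Aprime n τ τ', smap n τ τ' z - z ∉ wsub n τ τ' := by
    intro z hz
    rw [wsub, AddSubgroup.mem_closure_singleton] at hz
    obtain ⟨m, hm⟩ := hz
    have h01 : (0:ℕ) < 2*n := by omega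
    have h11 : 2*n-1 < 2*n := by omega
    have hfst := congrArg Prod.fst hm
    have e0 := congrFun hfst ⟨0, h01⟩
    have e1 := congrFun hfst ⟨2*n-1, h11⟩
    simp only [smap, wpt, Prod.smul_fst, Prod.fst_sub, Pi.smul_apply, Pi.sub_apply,
      Nat.sub_zero, Nat.sub_self] at e0 e1
    have cancel : ∀ (a c b0 b1 v : Ell τ), v = -a + b0 - c → v = -c + b1 - a → b0 = b1 := by
      intro a c b0 b1 v h0 h1
      have h2 := h0.symm.trans h1
      calc b0 = (a + c) + (-a + b0 - c) := by abel
        _ = (a + c) + (-c + b1 - a) := by rw [h2]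
        _ = b1 := by abel
    have key : bvec n τ ⟨0, h01⟩ = bvec n τ ⟨2*n-1, h11⟩ := cancel _ _ _ _ _ e0 e1
    have hodd : (2*n-1) % 2 = 1 := by omega
    have key' : ((1/2 + τ/2 : ℂ) : Ell τ) = ((τ/2 : ℂ) : Ell τ) := by
      simpa [bvec, hodd] using key
    rw [QuotientAddGroup.eq] at key'
    have h12 : (1/2:ℂ) = -(-(1/2+τ/2)+τ/2) := by ring
    exact half_not_mem τ hτ (h12 ▸ neg_mem key')
  refine ⟨key1, ?_⟩
  intro sbar hs x hx
  induction x using QuotientAddGroup.induction_on with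
  | H z =>
    rw [hs z, QuotientAddGroup.eq] at hx
    have hmem : smap n τ τ' z - z ∈ wsub n τ τ' := by
      have hh : smap n τ τ' z - z = -(-(smap n τ τ' z) + z) := by abel
      rw [hh]
      exact neg_mem hx
    exact key1 z hmem
end
end

section
/- Neither s̄ nor r̄ ∘ s̄ is a translation of A = A'/⟨w⟩: there is no element a ∈ A such that s̄(x) = x + a for all x ∈ A, and there is no element a ∈ A such that (r̄ ∘ s̄)(x) = x + a for all x ∈ A. -/
noncomputable section

lemma wsub_snd (n : ℕ) (τ τ' : ℂ) : ∀ v ∈ wsub n τ τ', v.2 = 0 := by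
  have h : wsub n τ τ' ≤ (AddMonoidHom.snd (Fin (2*n) → Ell τ) (Ell τ')).ker := by
    rw [wsub, AddSubgroup.closure_le]
    intro x hx
    rw [Set.mem_singleton_iff] at hx
    subst hx
    show (wpt n τ τ').2 = 0
    rfl
  intro v hv
  exact h hv

lemma half_not_mem_s14 {τ' : ℂ} (hτ' : τ'.im ≠ 0) : (1/2 : ℂ) ∉ Lam τ' := by
  rw [Lam, AddSubgroup.mem_closure_pair]
  rintro ⟨m, k, h⟩
  have him : (k : ℝ) * τ'.im = 0 := by
    have := congrArg Complex.im h
    simpa using this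
  have hk : k = 0 := by
    rcases mul_eq_zero.mp him with h' | h'
    · exact_mod_cast h'
    · exact absurd h' hτ'
  subst hk
  have hre := congrArg Complex.re h
  simp at hre
  have : (m : ℝ) = 1/2 := by simpa using hre
  have h2 : ((2*m : ℤ) : ℝ) = 1 := by push_cast; linarith
  have : (2*m : ℤ) = 1 := by exact_mod_cast h2
  omega

/-- neither s̄ nor r̄ ∘ s̄ is a translation of A. -/
theorem stmt_14 (n : ℕ) (hn : 1 ≤ n) (τ τ' : ℂ) (hτ : τ.im ≠ 0) (hτ' : τ'.im ≠ 0) :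
    ∀ rbar sbar : Aq n τ τ' → Aq n τ τ',
      (∀ z : Aprime n τ τ',
        rbar (z : Aq n τ τ') = ((rmap n τ τ' z : Aprime n τ τ') : Aq n τ τ')) →
      (∀ z : Aprime n τ τ',
        sbar (z : Aq n τ τ') = ((smap n τ τ' z : Aprime n τ τ') : Aq n τ τ')) →
      (¬ ∃ a : Aq n τ τ', ∀ x : Aq n τ τ', sbar x = x + a) ∧
      (¬ ∃ a : Aq n τ τ', ∀ x : Aq n τ τ', rbar (sbar x) = x + a) := by
  intro rbar sbar hr hs
  set t : Ell τ' := ((1/4 : ℂ) : Ell τ') with ht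
  set z : Aprime n τ τ' := (0, t) with hzdef
  have htt : t + t = ((1/2 : ℂ) : Ell τ') := by
    rw [ht, ← QuotientAddGroup.mk_add]
    norm_num
  have hhalf := half_not_mem_s14 hτ'
  constructor
  · rintro ⟨a, ha⟩
    have h0 : ((smap n τ τ' 0 : Aprime n τ τ') : Aq n τ τ') = ((0 : Aprime n τ τ') : Aq n τ τ') + a :=
      (hs 0).symm.trans (ha _)
    have ha0 : a = ((smap n τ τ' 0 : Aprime n τ τ') : Aq n τ τ') := by
      rw [h0]; exact (zero_add a).symm
    have hz : ((smap n τ τ' z : Aprime n τ τ') : Aq n τ τ')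
        = ((z + smap n τ τ' 0 : Aprime n τ τ') : Aq n τ τ') := by
      rw [QuotientAddGroup.mk_add, ← ha0]
      exact (hs z).symm.trans (ha _)
    have hmem : -(smap n τ τ' z) + (z + smap n τ τ' 0) ∈ wsub n τ τ' :=
      (QuotientAddGroup.eq ).mp hz
    have h2 := wsub_snd n τ τ' _ hmem
    have h3 : t + t = 0 := by
      have : (-(smap n τ τ' z) + (z + smap n τ τ' 0)).2
          = -(-(z.2)) + (z.2 + -(0:Ell τ')) := rfl
      rw [this] at h2
      simpa [hzdef] using h2
    rw [htt] at h3
    exact hhalf ((QuotientAddGroup.eq_zero_iff _).mp h3)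
  · rintro ⟨a, ha⟩
    have h0 : ((rmap n τ τ' (smap n τ τ' 0) : Aprime n τ τ') : Aq n τ τ')
        = ((0 : Aprime n τ τ') : Aq n τ τ') + a := by
      rw [← hr, ← hs 0]
      exact ha _
    have ha0 : a = ((rmap n τ τ' (smap n τ τ' 0) : Aprime n τ τ') : Aq n τ τ') := by
      rw [h0]; exact (zero_add a).symm
    have hz : ((rmap n τ τ' (smap n τ τ' z) : Aprime n τ τ') : Aq n τ τ')
        = ((z + rmap n τ τ' (smap n τ τ' 0) : Aprime n τ τ') : Aq n τ τ') := by
      rw [QuotientAddGroup.mk_add, ← ha0, ← hr, ← hs z]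
      exact ha _
    have hmem : -(rmap n τ τ' (smap n τ τ' z)) + (z + rmap n τ τ' (smap n τ τ' 0)) ∈ wsub n τ τ' :=
      (QuotientAddGroup.eq).mp hz
    have h2 := wsub_snd n τ τ' _ hmem
    have h3 : t + t = 0 := by
      have heq : (-(rmap n τ τ' (smap n τ τ' z)) + (z + rmap n τ τ' (smap n τ τ' 0))).2
          = -(-(z.2) + cE' n τ') + (z.2 + (-(0:Ell τ') + cE' n τ')) := rfl
      rw [heq] at h2
      have : t + t = -(-(z.2) + cE' n τ') + (z.2 + (-(0:Ell τ') + cE' n τ')) := by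
        rw [hzdef]; abel
      rw [this, h2]
    rw [htt] at h3
    exact hhalf ((QuotientAddGroup.eq_zero_iff _).mp h3)
end
end

section
/- For every natural number m ≥ 1, setting N = lcm(4, m) and n = N/4, there exists an injective group homomorphism ψ from the dihedral group D_m of order 2m into the group of bijections of A = A'/⟨w⟩ (where A' = E^{2n} × E' has dimension N/2 + 1 as a complex torus) such that for every g ∈ D_m, ψ(g) is an affine transformation of A (of the form x ↦ α(x) + a with α an additive automorphism of A and a ∈ A), and for every g ≠ 1 in D_m, ψ(g) has no fixed points on A and is not a translation x ↦ x + a. -/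
noncomputable section

namespace St18

variable {τ τ' : ℂ} {n : ℕ}

set_option synthInstance.maxHeartbeats 400000

instance addAutMulGroup (M : Type*) [Add M] : Group (AddAut M) where
  mul g h := AddEquiv.trans h g
  one := AddEquiv.refl _
  inv := AddEquiv.symm
  mul_assoc _ _ _ := rfl
  one_mul _ := rfl
  mul_one _ := rfl
  inv_mul_cancel := AddEquiv.self_trans_symm

lemma addAut_one_apply {M : Type*} [Add M] (x : M) : (1 : AddAut M) x = x := rfl

/-! ### Lattice lemmas -/

private def LamSet (τ : ℂ) : AddSubgroup ℂ where
  carrier := {x | ∃ a b : ℤ, x = a + b * τ}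
  zero_mem' := ⟨0, 0, by simp⟩
  add_mem' := by rintro x y ⟨a, b, rfl⟩ ⟨c, d, rfl⟩; exact ⟨a + c, b + d, by push_cast; ring⟩
  neg_mem' := by rintro x ⟨a, b, rfl⟩; exact ⟨-a, -b, by push_cast; ring⟩

lemma one_mem_Lam : (1 : ℂ) ∈ Lam τ := AddSubgroup.subset_closure (by simp)

lemma tau_mem_Lam : τ ∈ Lam τ := AddSubgroup.subset_closure (by simp)

lemma mem_Lam_iff {x : ℂ} : x ∈ Lam τ ↔ ∃ a b : ℤ, x = a + b * τ := by
  constructor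
  · intro h
    have hle : Lam τ ≤ LamSet τ := by
      rw [Lam]
      apply (AddSubgroup.closure_le (LamSet τ)).mpr
      intro y hy
      rcases hy with rfl | rfl
      · exact ⟨1, 0, by push_cast; ring⟩
      · exact ⟨0, 1, by push_cast; ring⟩
    exact hle h
  · rintro ⟨a, b, rfl⟩
    have h1 : (a : ℂ) ∈ Lam τ := by
      have := AddSubgroup.zsmul_mem _ (one_mem_Lam (τ := τ)) a
      simpa using this
    have h2 : (b : ℂ) * τ ∈ Lam τ := by
      have := AddSubgroup.zsmul_mem _ (tau_mem_Lam (τ := τ)) b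
      simpa [zsmul_eq_mul] using this
    exact add_mem h1 h2

lemma lam_free (hτ : τ.im ≠ 0) {p q : ℝ} (h : (p : ℂ) + (q : ℂ) * τ ∈ Lam τ) :
    ∃ a b : ℤ, p = (a : ℝ) ∧ q = (b : ℝ) := by
  rcases mem_Lam_iff.mp h with ⟨a, b, hab⟩
  have him := congrArg Complex.im hab
  simp [Complex.add_im, Complex.mul_im] at him
  have hq : q = (b : ℝ) := by
    have : q * τ.im = (b : ℝ) * τ.im := by simpa using him
    exact mul_right_cancel₀ hτ this
  have hre := congrArg Complex.re hab
  simp [Complex.add_re, Complex.mul_re] at hre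
  refine ⟨a, b, ?_, hq⟩
  rw [hq] at hre
  linarith [hre]

/-! ### The antiperiodic extension -/

/-- Antiperiodic extension of `z : Fin (2n) → E` to `ℤ`. -/
def uex (n : ℕ) {τ : ℂ} (z : Fin (2*n) → Ell τ) : ℤ → Ell τ := fun j =>
  if h : ((j % (4*(n:ℤ))).toNat) < 2*n then z ⟨_, h⟩
  else if h2 : ((j % (4*(n:ℤ))).toNat) - 2*n < 2*n then -z ⟨_, h2⟩ else 0

lemma emod_bounds (hn : 0 < n) (j : ℤ) :
    0 ≤ j % (4*(n:ℤ)) ∧ j % (4*(n:ℤ)) < 4*n := by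
  have h4 : (0:ℤ) < 4*(n:ℤ) := by exact_mod_cast (by omega : (0:ℕ) < 4*n)
  exact ⟨Int.emod_nonneg j (ne_of_gt h4), Int.emod_lt_of_pos j h4⟩

lemma emod_shift (hn : 0 < n) (j : ℤ) :
    (j + 2*(n:ℤ)) % (4*(n:ℤ)) =
      (if j % (4*(n:ℤ)) < 2*(n:ℤ) then j % (4*(n:ℤ)) + 2*n else j % (4*(n:ℤ)) - 2*n) := by
  obtain ⟨he0, helt⟩ := emod_bounds hn j
  have key : (j + 2*(n:ℤ)) % (4*(n:ℤ)) = (j % (4*(n:ℤ)) + 2*(n:ℤ)) % (4*(n:ℤ)) := by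
    conv_lhs => rw [← Int.mul_ediv_add_emod j (4*(n:ℤ))]
    rw [show 4*(n:ℤ) * (j / (4*(n:ℤ))) + j % (4*(n:ℤ)) + 2*(n:ℤ)
        = j % (4*(n:ℤ)) + 2*(n:ℤ) + 4*(n:ℤ) * (j / (4*(n:ℤ))) by ring]
    exact Int.add_mul_emod_self_left ..
  rw [key]
  split_ifs with h
  · exact Int.emod_eq_of_lt (by omega) (by omega)
  · have h2 : j % (4*(n:ℤ)) + 2*(n:ℤ) = (j % (4*(n:ℤ)) - 2*(n:ℤ)) + 4*(n:ℤ) * 1 := by ring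
    rw [h2, Int.add_mul_emod_self_left ..]
    exact Int.emod_eq_of_lt (by omega) (by omega)

lemma uex_natCast (hn : 0 < n) (z : Fin (2*n) → Ell τ) (i : ℕ) (h : i < 2*n) :
    uex n z (i : ℤ) = z ⟨i, h⟩ := by
  have he : ((i:ℤ) % (4*(n:ℤ))) = (i:ℤ) := Int.emod_eq_of_lt (by omega) (by push_cast; omega)
  rw [uex, he]
  rw [dif_pos (by omega)]
  exact congrArg z (Fin.ext (by simp only [Fin.val_mk]; omega))

lemma uex_natCast' (hn : 0 < n) (z : Fin (2*n) → Ell τ) (i : ℕ) (h1 : 2*n ≤ i) (h2 : i < 4*n) :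
    uex n z (i : ℤ) = -z ⟨i - 2*n, by omega⟩ := by
  have he : ((i:ℤ) % (4*(n:ℤ))) = (i:ℤ) := Int.emod_eq_of_lt (by omega) (by push_cast; omega)
  rw [uex, he, dif_neg (by omega), dif_pos (by omega)]
  congr 1

lemma uex_add_two (hn : 0 < n) (z : Fin (2*n) → Ell τ) (j : ℤ) :
    uex n z (j + 2*(n:ℤ)) = - uex n z j := by
  obtain ⟨he0, helt⟩ := emod_bounds hn j
  by_cases h : j % (4*(n:ℤ)) < 2*(n:ℤ)
  · rw [uex, uex, emod_shift hn j, if_pos h, dif_neg (by omega), dif_pos (by omega),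
      dif_pos (by omega)]
    congr 1
    refine congrArg z (Fin.ext ?_)
    simp only [Fin.val_mk]
    omega
  · rw [uex, uex, emod_shift hn j, if_neg h, dif_pos (by omega), dif_neg (by omega),
      dif_pos (by omega), neg_neg]
    refine congrArg z (Fin.ext ?_)
    simp only [Fin.val_mk]
    omega

lemma uex_sub_two (hn : 0 < n) (z : Fin (2*n) → Ell τ) (j : ℤ) :
    uex n z (j - 2*(n:ℤ)) = - uex n z j := by
  have h := uex_add_two hn z (j - 2*(n:ℤ))
  rw [sub_add_cancel] at h
  rw [h, neg_neg]

lemma uex_add_four (hn : 0 < n) (z : Fin (2*n) → Ell τ) (j : ℤ) :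
    uex n z (j + 4*(n:ℤ)) = uex n z j := by
  have h : j + 4*(n:ℤ) = (j + 2*(n:ℤ)) + 2*(n:ℤ) := by ring
  rw [h, uex_add_two hn, uex_add_two hn, neg_neg]

lemma uex_sub_four (hn : 0 < n) (z : Fin (2*n) → Ell τ) (j : ℤ) :
    uex n z (j - 4*(n:ℤ)) = uex n z j := by
  have h := uex_add_four hn z (j - 4*(n:ℤ))
  rw [sub_add_cancel] at h
  exact h.symm

lemma uex_zero (j : ℤ) : uex n (fun _ => (0 : Ell τ)) j = 0 := by
  rw [uex]
  split_ifs <;> simp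


/-! ### R and S as additive automorphisms of A' -/

def Rinv (n : ℕ) (τ τ' : ℂ) : Aprime n τ τ' → Aprime n τ τ' :=
  fun z => (fun i =>
    if h : i.val = 2*n-1 then -z.1 ⟨0, by have := i.isLt; omega⟩
    else z.1 ⟨i.val + 1, by have := i.isLt; omega⟩, z.2)

def RA (n : ℕ) (τ τ' : ℂ) : AddAut (Aprime n τ τ') where
  toFun := Rmap n τ τ'
  invFun := Rinv n τ τ'
  left_inv := by
    intro z
    refine Prod.ext (funext fun i => ?_) rfl
    have hi := i.isLt
    simp only [Rmap, Rinv, Fin.val_mk]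
    split_ifs <;>
      first
        | contradiction
        | (exfalso; omega)
        | (rw [neg_neg]; exact congrArg (fun t => z.1 t) (Fin.ext (by simp only [Fin.val_mk]; omega)))
        | exact congrArg (fun t => z.1 t) (Fin.ext (by simp only [Fin.val_mk]; omega))
        | (rw [neg_neg]; exact congrArg (fun t => -z.1 t) (Fin.ext (by simp only [Fin.val_mk]; omega)))
        | exact congrArg (fun t => -z.1 t) (Fin.ext (by simp only [Fin.val_mk]; omega))
        | exact congrArg (fun t => z.1 t) (Fin.ext (by omega))
        | exact congrArg (fun t => -z.1 t) (Fin.ext (by omega))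
        | (rw [neg_neg]; exact congrArg (fun t => z.1 t) (Fin.ext (by omega)))
        | (rw [neg_neg]; exact congrArg (fun t => -z.1 t) (Fin.ext (by omega)))
  right_inv := by
    intro z
    refine Prod.ext (funext fun i => ?_) rfl
    have hi := i.isLt
    simp only [Rmap, Rinv, Fin.val_mk]
    split_ifs <;>
      first
        | contradiction
        | (exfalso; omega)
        | (rw [neg_neg]; exact congrArg (fun t => z.1 t) (Fin.ext (by simp only [Fin.val_mk]; omega)))
        | exact congrArg (fun t => z.1 t) (Fin.ext (by simp only [Fin.val_mk]; omega))
        | (rw [neg_neg]; exact congrArg (fun t => -z.1 t) (Fin.ext (by simp only [Fin.val_mk]; omega)))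
        | exact congrArg (fun t => -z.1 t) (Fin.ext (by simp only [Fin.val_mk]; omega))
        | exact congrArg (fun t => z.1 t) (Fin.ext (by omega))
        | exact congrArg (fun t => -z.1 t) (Fin.ext (by omega))
        | (rw [neg_neg]; exact congrArg (fun t => z.1 t) (Fin.ext (by omega)))
        | (rw [neg_neg]; exact congrArg (fun t => -z.1 t) (Fin.ext (by omega)))
  map_add' := by
    intro a b
    refine Prod.ext (funext fun i => ?_) rfl
    simp only [Rmap, Prod.fst_add, Pi.add_apply]
    split_ifs <;> simp [neg_add, add_comm]

def SA (n : ℕ) (τ τ' : ℂ) : AddAut (Aprime n τ τ') where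
  toFun := Smap n τ τ'
  invFun := Smap n τ τ'
  left_inv := by
    intro z
    refine Prod.ext (funext fun i => ?_) (neg_neg _)
    have hi := i.isLt
    simp only [Smap, Fin.val_mk, neg_neg]
    exact congrArg (fun t => z.1 t) (Fin.ext (by simp only [Fin.val_mk]; omega))
  right_inv := by
    intro z
    refine Prod.ext (funext fun i => ?_) (neg_neg _)
    have hi := i.isLt
    simp only [Smap, Fin.val_mk, neg_neg]
    exact congrArg (fun t => z.1 t) (Fin.ext (by simp only [Fin.val_mk]; omega))
  map_add' := by
    intro a b
    refine Prod.ext (funext fun i => ?_) (neg_add a.2 b.2)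
    simp only [Smap, Prod.fst_add, Pi.add_apply, neg_add]

lemma RA_apply (z : Aprime n τ τ') : RA n τ τ' z = Rmap n τ τ' z := rfl
lemma SA_apply (z : Aprime n τ τ') : SA n τ τ' z = Smap n τ τ' z := rfl

lemma RA_pow_fst (hn : 0 < n) (t : ℕ) (z : Aprime n τ τ') (i : Fin (2*n)) :
    ((RA n τ τ' ^ t) z).1 i = uex n z.1 ((i.val : ℤ) - t) := by
  induction t generalizing i with
  | zero =>
    simp only [pow_zero, addAut_one_apply, Nat.cast_zero, sub_zero]
    exact (uex_natCast hn z.1 i.val i.isLt).symm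
  | succ t ih =>
    rw [pow_succ']
    have happ : ((RA n τ τ' * RA n τ τ' ^ t) z) = RA n τ τ' ((RA n τ τ' ^ t) z) := rfl
    rw [happ, RA_apply]
    show (if i.val = 0 then -((RA n τ τ' ^ t) z).1 ⟨2*n-1, by omega⟩
      else ((RA n τ τ' ^ t) z).1 ⟨i.val - 1, by have := i.isLt; omega⟩) = _
    by_cases h : i.val = 0
    · rw [if_pos h, ih ⟨2*n-1, by omega⟩]
      show -uex n z.1 (((2*n-1 : ℕ) : ℤ) - t) = uex n z.1 ((i.val:ℤ) - ((t+1 : ℕ) : ℤ))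
      have h1 : ((2*n-1 : ℕ) : ℤ) - t
          = (((i.val:ℤ) - ((t+1:ℕ):ℤ)) - 2*(n:ℤ)) + 4*(n:ℤ) := by omega
      rw [h1, uex_add_four hn, uex_sub_two hn, neg_neg]
    · rw [if_neg h, ih ⟨i.val - 1, by have := i.isLt; omega⟩]
      show uex n z.1 (((i.val - 1 : ℕ) : ℤ) - t) = uex n z.1 ((i.val:ℤ) - ((t+1 : ℕ) : ℤ))
      congr 1
      omega

lemma RA_pow_snd (t : ℕ) (z : Aprime n τ τ') : ((RA n τ τ' ^ t) z).2 = z.2 := by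
  induction t with
  | zero => rfl
  | succ t ih => rw [pow_succ']; exact ih

lemma RA_pow_4n (hn : 0 < n) : (RA n τ τ') ^ (4*n) = 1 := by
  refine AddEquiv.ext fun z => ?_
  refine Prod.ext (funext fun i => ?_) (RA_pow_snd _ _)
  rw [RA_pow_fst hn]
  have h1 : ((i.val : ℤ) - ((4*n : ℕ) : ℤ)) = (i.val:ℤ) - 4*(n:ℤ) := by push_cast; ring
  rw [h1, uex_sub_four hn, uex_natCast hn z.1 i.val i.isLt]
  rfl

lemma RSR (z : Aprime n τ τ') :
    Rmap n τ τ' (Smap n τ τ' (Rmap n τ τ' z)) = Smap n τ τ' z := by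
  refine Prod.ext (funext fun i => ?_) rfl
  have hi := i.isLt
  simp only [Rmap, Smap, Fin.val_mk]
  split_ifs <;>
      first
        | contradiction
        | (exfalso; omega)
        | (rw [neg_neg]; exact congrArg (fun t => z.1 t) (Fin.ext (by simp only [Fin.val_mk]; omega)))
        | exact congrArg (fun t => z.1 t) (Fin.ext (by simp only [Fin.val_mk]; omega))
        | (rw [neg_neg]; exact congrArg (fun t => -z.1 t) (Fin.ext (by simp only [Fin.val_mk]; omega)))
        | exact congrArg (fun t => -z.1 t) (Fin.ext (by simp only [Fin.val_mk]; omega))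
        | exact congrArg (fun t => z.1 t) (Fin.ext (by omega))
        | exact congrArg (fun t => -z.1 t) (Fin.ext (by omega))
        | (rw [neg_neg]; exact congrArg (fun t => z.1 t) (Fin.ext (by omega)))
        | (rw [neg_neg]; exact congrArg (fun t => -z.1 t) (Fin.ext (by omega)))

lemma RSR_aut : RA n τ τ' * SA n τ τ' * RA n τ τ' = SA n τ τ' :=
  AddEquiv.ext fun z => RSR z

lemma SS_aut : SA n τ τ' * SA n τ τ' = 1 :=
  AddEquiv.ext fun z => (SA n τ τ').left_inv z

/-! ### Quotient automorphisms -/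

lemma neg_half_eq (τ : ℂ) : ((-(1/2) : ℂ) : Ell τ) = ((1/2 : ℂ) : Ell τ) := by
  refine QuotientAddGroup.eq.mpr ?_
  have h1 : -(-(1/2 : ℂ)) + 1/2 = 1 := by ring
  rw [h1]; exact one_mem_Lam

lemma Rmap_wpt : Rmap n τ τ' (wpt n τ τ') = wpt n τ τ' := by
  refine Prod.ext (funext fun i => ?_) rfl
  simp only [Rmap, wpt]
  split_ifs
  · rw [show (-(((1/2:ℂ)) : Ell τ)) = ((-(1/2) : ℂ) : Ell τ) from (QuotientAddGroup.mk_neg _ _)]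
    exact neg_half_eq τ
  · rfl

lemma Smap_wpt : Smap n τ τ' (wpt n τ τ') = wpt n τ τ' := by
  refine Prod.ext (funext fun i => ?_) (neg_zero)
  simp only [Smap, wpt]
  rw [show (-(((1/2:ℂ)) : Ell τ)) = ((-(1/2) : ℂ) : Ell τ) from (QuotientAddGroup.mk_neg _ _)]
  exact neg_half_eq τ

lemma hwR : (wsub n τ τ').map (RA n τ τ' : Aprime n τ τ' ≃+ Aprime n τ τ') = wsub n τ τ' := by
  rw [wsub, AddMonoidHom.map_closure, Set.image_singleton]
  norm_num [RA_apply, Rmap_wpt]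

lemma hwS : (wsub n τ τ').map (SA n τ τ' : Aprime n τ τ' ≃+ Aprime n τ τ') = wsub n τ τ' := by
  rw [wsub, AddMonoidHom.map_closure, Set.image_singleton]
  norm_num [SA_apply, Smap_wpt]

def Rq (n : ℕ) (τ τ' : ℂ) : AddAut (Aq n τ τ') :=
  QuotientAddGroup.congr (wsub n τ τ') (wsub n τ τ') (RA n τ τ') hwR

def Sq (n : ℕ) (τ τ' : ℂ) : AddAut (Aq n τ τ') :=
  QuotientAddGroup.congr (wsub n τ τ') (wsub n τ τ') (SA n τ τ') hwS

lemma Rq_mk (z : Aprime n τ τ') :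
    Rq n τ τ' (QuotientAddGroup.mk z) = QuotientAddGroup.mk (Rmap n τ τ' z) := rfl

lemma Sq_mk (z : Aprime n τ τ') :
    Sq n τ τ' (QuotientAddGroup.mk z) = QuotientAddGroup.mk (Smap n τ τ' z) := rfl

lemma Rq_pow_mk (t : ℕ) (z : Aprime n τ τ') :
    ((Rq n τ τ') ^ t) (QuotientAddGroup.mk z) = QuotientAddGroup.mk ((RA n τ τ' ^ t) z) := by
  induction t with
  | zero => rfl
  | succ t ih =>
    rw [pow_succ', pow_succ']
    have h1 : ((Rq n τ τ' * Rq n τ τ' ^ t) (QuotientAddGroup.mk z))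
        = Rq n τ τ' ((Rq n τ τ' ^ t) (QuotientAddGroup.mk z)) := rfl
    have h2 : ((RA n τ τ' * RA n τ τ' ^ t) z) = RA n τ τ' ((RA n τ τ' ^ t) z) := rfl
    rw [h1, h2, ih, Rq_mk, RA_apply]

lemma Rq_pow_4n (hn : 0 < n) : (Rq n τ τ') ^ (4*n) = 1 := by
  refine AddEquiv.ext fun x => ?_
  induction x using QuotientAddGroup.induction_on with
  | H z => rw [Rq_pow_mk, RA_pow_4n hn]; rfl

lemma RqSqRq : Rq n τ τ' * Sq n τ τ' * Rq n τ τ' = Sq n τ τ' := by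
  refine AddEquiv.ext fun x => ?_
  induction x using QuotientAddGroup.induction_on with
  | H z =>
    have h1 : (Rq n τ τ' * Sq n τ τ' * Rq n τ τ') (QuotientAddGroup.mk z)
        = Rq n τ τ' (Sq n τ τ' (Rq n τ τ' (QuotientAddGroup.mk z))) := rfl
    rw [h1, Rq_mk, Sq_mk, Rq_mk, RSR]
    rfl

lemma SqSq : Sq n τ τ' * Sq n τ τ' = 1 := by
  refine AddEquiv.ext fun x => ?_
  induction x using QuotientAddGroup.induction_on with
  | H z =>
    have h1 : (Sq n τ τ' * Sq n τ τ') (QuotientAddGroup.mk z)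
        = Sq n τ τ' (Sq n τ τ' (QuotientAddGroup.mk z)) := rfl
    have h2 : Smap n τ τ' (Smap n τ τ' z) = z := (SA n τ τ').left_inv z
    rw [h1, Sq_mk, Sq_mk, h2]
    rfl

/-! ### Affine permutations -/

def aff {G : Type*} [AddGroup G] (α : AddAut G) (a : G) : Equiv.Perm G :=
  α.toEquiv.trans (Equiv.addRight a)

lemma aff_apply {G : Type*} [AddGroup G] (α : AddAut G) (a : G) (x : G) :
    aff α a x = α x + a := rfl

lemma aff_mul {G : Type*} [AddGroup G] (α β : AddAut G) (a b : G) :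
    aff α a * aff β b = aff (α * β) (α b + a) := by
  refine Equiv.ext fun x => ?_
  show aff α a (aff β b x) = _
  simp only [aff_apply]
  have h1 : (α * β) x = α (β x) := rfl
  rw [h1, map_add, add_assoc]

lemma aff_one {G : Type*} [AddGroup G] : aff (1 : AddAut G) (0 : G) = 1 := by
  refine Equiv.ext fun x => ?_
  simp [aff_apply, addAut_one_apply]

lemma aff_inv {G : Type*} [AddGroup G] (α : AddAut G) (a : G) :
    (aff α a)⁻¹ = aff α⁻¹ (-(α⁻¹ a)) := by
  symm
  rw [eq_inv_iff_mul_eq_one, aff_mul]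
  have h1 : α⁻¹ * α = 1 := inv_mul_cancel α
  have h2 : (α⁻¹) a + -(α⁻¹ a) = 0 := add_neg_cancel _
  rw [h1, h2]
  exact aff_one

lemma aff_pow_of_fix {G : Type*} [AddGroup G] (α : AddAut G) (a : G) (hfix : α a = a) :
    ∀ t : ℕ, (aff α a) ^ t = aff (α ^ t) (t • a) := by
  intro t
  induction t with
  | zero => simp [pow_zero, zero_nsmul]; exact aff_one.symm
  | succ t ih =>
    have hfixt : (α ^ t) a = a := by
      clear ih
      induction t with
      | zero => rfl
      | succ t ih2 =>
        rw [pow_succ']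
        have : (α * α ^ t) a = α ((α ^ t) a) := rfl
        rw [this, ih2, hfix]
    rw [pow_succ, ih, aff_mul, hfixt, ← pow_succ, succ_nsmul']

/-! ### The elements r₁ and σ of Perm(A) -/

def cpt (n : ℕ) (τ τ' : ℂ) : Aprime n τ τ' := ((fun _ => 0), cE' n τ')

def bpt (n : ℕ) (τ τ' : ℂ) : Aprime n τ τ' := (bvec n τ, 0)

lemma Rmap_cpt : Rmap n τ τ' (cpt n τ τ') = cpt n τ τ' := by
  refine Prod.ext (funext fun i => ?_) rfl
  simp only [Rmap, cpt]
  split_ifs <;> simp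

lemma Smap_cpt : Smap n τ τ' (cpt n τ τ') = -cpt n τ τ' := by
  refine Prod.ext (funext fun i => ?_) rfl
  simp only [Smap, cpt]
  simp

lemma smul_cpt (hn : 0 < n) : (4*n) • cpt n τ τ' = 0 := by
  refine Prod.ext (funext fun i => ?_) ?_
  · show (4*n) • ((0 : Ell τ)) = 0
    simp
  · show (4*n) • cE' n τ' = 0
    rw [cE']
    have h1 : (4*n) • (((1/(4*(n:ℂ))) : ℂ) : Ell τ') = (((4*n : ℕ) • (1/(4*(n:ℂ))) : ℂ) : Ell τ') := by
      exact (map_nsmul (QuotientAddGroup.mk' (Lam τ')) _ _).symm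
    rw [h1]
    have h2 : ((4*n : ℕ) • (1/(4*(n:ℂ))) : ℂ) = 1 := by
      rw [nsmul_eq_mul]
      have : ((4*n : ℕ) : ℂ) = 4*(n:ℂ) := by push_cast; ring
      rw [this]
      have hne : (4*(n:ℂ)) ≠ 0 := by
        simp only [ne_eq, mul_eq_zero]
        push_neg
        exact ⟨by norm_num, Nat.cast_ne_zero.mpr (by omega)⟩
      exact mul_one_div_cancel hne
    rw [h2]
    exact (QuotientAddGroup.eq_zero_iff _).mpr one_mem_Lam

lemma sSb : Smap n τ τ' (bpt n τ τ') + bpt n τ τ' = wpt n τ τ' := by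
  refine Prod.ext (funext fun i => ?_) (by simp [Smap, bpt, wpt])
  have hi := i.isLt
  show -(bvec n τ ⟨2*n-1-i.val, by omega⟩) + bvec n τ i = ((1/2 : ℂ) : Ell τ)
  simp only [bvec, Fin.val_mk]
  rcases Nat.even_or_odd i.val with he | ho
  · have h1 : i.val % 2 = 0 := Nat.even_iff.mp he
    rw [if_neg (by omega), if_pos h1]
    rw [show (-(((τ/2 : ℂ)) : Ell τ)) = ((-(τ/2) : ℂ) : Ell τ) from (QuotientAddGroup.mk_neg _ _)]
    rw [show ((((-(τ/2)) : ℂ) : Ell τ) + ((1/2 + τ/2 : ℂ) : Ell τ))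
      = (((-(τ/2)) + (1/2 + τ/2) : ℂ) : Ell τ) from rfl]
    exact congrArg _ (by ring)
  · have h1 : i.val % 2 = 1 := Nat.odd_iff.mp ho
    rw [if_pos (by omega), if_neg (by omega)]
    rw [show (-(((1/2 + τ/2 : ℂ)) : Ell τ)) = ((-(1/2 + τ/2) : ℂ) : Ell τ)
      from (QuotientAddGroup.mk_neg _ _)]
    rw [show ((((-(1/2 + τ/2)) : ℂ) : Ell τ) + ((τ/2 : ℂ) : Ell τ))
      = (((-(1/2 + τ/2)) + (τ/2) : ℂ) : Ell τ) from rfl]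
    rw [show ((-(1/2 + τ/2)) + (τ/2) : ℂ) = -(1/2) by ring]
    exact neg_half_eq τ

lemma sRb : Smap n τ τ' (Rmap n τ τ' (bpt n τ τ')) + bpt n τ τ' = 0 := by
  refine Prod.ext (funext fun i => ?_) (by simp [Smap, Rmap, bpt])
  have hi := i.isLt
  show -((Rmap n τ τ' (bpt n τ τ')).1 ⟨2*n-1-i.val, by omega⟩) + bvec n τ i = 0
  by_cases h : i.val = 2*n-1
  · have h0 : (2*n-1-i.val) = 0 := by omega
    show -(if (⟨2*n-1-i.val, by omega⟩ : Fin (2*n)).val = 0 then -(bpt n τ τ').1 ⟨2*n-1, by omega⟩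
      else (bpt n τ τ').1 ⟨2*n-1-i.val-1, by omega⟩) + bvec n τ i = 0
    rw [if_pos (by simp only [Fin.val_mk]; omega), neg_neg]
    show bvec n τ ⟨2*n-1, by omega⟩ + bvec n τ i = 0
    have hodd : (2*n-1) % 2 = 1 := by omega
    have hiodd : i.val % 2 = 1 := by omega
    simp only [bvec, Fin.val_mk]
    rw [if_neg (by omega), if_neg (by omega)]
    rw [show ((((τ/2) : ℂ) : Ell τ) + ((τ/2 : ℂ) : Ell τ))
      = (((τ/2) + (τ/2) : ℂ) : Ell τ) from rfl]
    rw [show ((τ/2) + (τ/2) : ℂ) = τ by ring]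
    exact (QuotientAddGroup.eq_zero_iff _).mpr tau_mem_Lam
  · show -(if (⟨2*n-1-i.val, by omega⟩ : Fin (2*n)).val = 0 then -(bpt n τ τ').1 ⟨2*n-1, by omega⟩
      else (bpt n τ τ').1 ⟨2*n-1-i.val-1, by omega⟩) + bvec n τ i = 0
    rw [if_neg (by simp only [Fin.val_mk]; omega)]
    show -(bvec n τ ⟨2*n-1-i.val-1, by omega⟩) + bvec n τ i = 0
    have hpar : (2*n-1-i.val-1) % 2 = i.val % 2 := by omega
    simp only [bvec, Fin.val_mk]
    rcases Nat.even_or_odd i.val with he | ho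
    · have h1 : i.val % 2 = 0 := Nat.even_iff.mp he
      rw [if_pos (by omega), if_pos h1, neg_add_cancel]
    · have h1 : i.val % 2 = 1 := Nat.odd_iff.mp ho
      rw [if_neg (by omega), if_neg (by omega), neg_add_cancel]

def r1 (n : ℕ) (τ τ' : ℂ) : Equiv.Perm (Aq n τ τ') :=
  aff (Rq n τ τ') (QuotientAddGroup.mk (cpt n τ τ'))

def sg (n : ℕ) (τ τ' : ℂ) : Equiv.Perm (Aq n τ τ') :=
  aff (Sq n τ τ') (QuotientAddGroup.mk (bpt n τ τ'))

lemma Rq_cb : Rq n τ τ' (QuotientAddGroup.mk (cpt n τ τ')) = QuotientAddGroup.mk (cpt n τ τ') := by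
  rw [Rq_mk, Rmap_cpt]

lemma Sq_cb : Sq n τ τ' (QuotientAddGroup.mk (cpt n τ τ'))
    = -QuotientAddGroup.mk (cpt n τ τ') := by
  rw [Sq_mk, Smap_cpt]
  rfl

lemma r1_pow (t : ℕ) : (r1 n τ τ') ^ t
    = aff ((Rq n τ τ') ^ t) (t • QuotientAddGroup.mk (cpt n τ τ')) :=
  aff_pow_of_fix (G := Aq n τ τ') _ _ Rq_cb t

lemma mk_smul_cpt (hn : 0 < n) :
    (4*n) • (QuotientAddGroup.mk (cpt n τ τ') : Aq n τ τ') = 0 := by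
  have h1 : (4*n) • (QuotientAddGroup.mk (cpt n τ τ') : Aq n τ τ')
      = QuotientAddGroup.mk ((4*n) • cpt n τ τ') :=
    (map_nsmul (QuotientAddGroup.mk' (wsub n τ τ')) _ _).symm
  rw [h1, smul_cpt hn]
  rfl

lemma r1_pow_4n (hn : 0 < n) : (r1 n τ τ') ^ (4*n) = 1 := by
  rw [r1_pow, Rq_pow_4n hn, mk_smul_cpt hn]
  exact aff_one

lemma sg_sg : sg n τ τ' * sg n τ τ' = 1 := by
  rw [sg, aff_mul, SqSq]
  have h1 : Sq n τ τ' (QuotientAddGroup.mk (bpt n τ τ'))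
      + QuotientAddGroup.mk (bpt n τ τ')
      = QuotientAddGroup.mk (Smap n τ τ' (bpt n τ τ') + bpt n τ τ') := by
    rw [Sq_mk]; rfl
  rw [h1, sSb]
  have h2 : (QuotientAddGroup.mk (wpt n τ τ') : Aq n τ τ') = 0 :=
    (QuotientAddGroup.eq_zero_iff _).mpr (AddSubgroup.subset_closure rfl)
  rw [h2]
  exact aff_one

lemma SqRqSq : Sq n τ τ' * Rq n τ τ' * Sq n τ τ' = (Rq n τ τ')⁻¹ := by
  have h1 : Rq n τ τ' * (Sq n τ τ' * Rq n τ τ' * Sq n τ τ') = 1 := by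
    rw [show Rq n τ τ' * (Sq n τ τ' * Rq n τ τ' * Sq n τ τ')
      = (Rq n τ τ' * Sq n τ τ' * Rq n τ τ') * Sq n τ τ' by group, RqSqRq, SqSq]
  exact (eq_inv_of_mul_eq_one_right h1).symm ▸ (inv_eq_of_mul_eq_one_right h1).symm

lemma sg_r1_sg : sg n τ τ' * r1 n τ τ' * sg n τ τ' = (r1 n τ τ')⁻¹ := by
  rw [sg, r1, aff_mul, aff_mul, aff_inv]
  have hinv : (Rq n τ τ')⁻¹ (QuotientAddGroup.mk (cpt n τ τ'))
      = QuotientAddGroup.mk (cpt n τ τ') := by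
    have := congrArg (fun e => (Rq n τ τ')⁻¹ e) Rq_cb
    exact this.symm.trans ((Rq n τ τ').symm_apply_apply _)
  rw [hinv]
  have hlin : Sq n τ τ' * Rq n τ τ' * Sq n τ τ' = (Rq n τ τ')⁻¹ := SqRqSq
  have htr : (Sq n τ τ' * Rq n τ τ') (QuotientAddGroup.mk (bpt n τ τ'))
      + (Sq n τ τ' (QuotientAddGroup.mk (cpt n τ τ'))
        + QuotientAddGroup.mk (bpt n τ τ'))
      = -QuotientAddGroup.mk (cpt n τ τ') := by
    have h2 : (Sq n τ τ' * Rq n τ τ') (QuotientAddGroup.mk (bpt n τ τ'))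
        = QuotientAddGroup.mk (Smap n τ τ' (Rmap n τ τ' (bpt n τ τ'))) := rfl
    rw [h2, Sq_cb]
    have h3 : (QuotientAddGroup.mk (Smap n τ τ' (Rmap n τ τ' (bpt n τ τ'))) : Aq n τ τ')
        + QuotientAddGroup.mk (bpt n τ τ')
        = QuotientAddGroup.mk (Smap n τ τ' (Rmap n τ τ' (bpt n τ τ')) + bpt n τ τ') := rfl
    calc QuotientAddGroup.mk (Smap n τ τ' (Rmap n τ τ' (bpt n τ τ')))
        + (-QuotientAddGroup.mk (cpt n τ τ') + QuotientAddGroup.mk (bpt n τ τ'))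
        = (QuotientAddGroup.mk (Smap n τ τ' (Rmap n τ τ' (bpt n τ τ')))
          + QuotientAddGroup.mk (bpt n τ τ')) + -QuotientAddGroup.mk (cpt n τ τ') := by abel
      _ = QuotientAddGroup.mk (Smap n τ τ' (Rmap n τ τ' (bpt n τ τ')) + bpt n τ τ')
          + -QuotientAddGroup.mk (cpt n τ τ') := by rw [h3]
      _ = -QuotientAddGroup.mk (cpt n τ τ') := by rw [sRb]; exact zero_add (M := Aq n τ τ') _
  rw [hlin, htr]

/-! ### Evaluation homomorphisms and smul lemmas -/

def evF (n : ℕ) (τ τ' : ℂ) (i : Fin (2*n)) : Aprime n τ τ' →+ Ell τ :=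
  (Pi.evalAddMonoidHom (fun _ => Ell τ) i).comp (AddMonoidHom.fst _ _)

def evS (n : ℕ) (τ τ' : ℂ) : Aprime n τ τ' →+ Ell τ' := AddMonoidHom.snd _ _

lemma evF_apply (p : Aprime n τ τ') (i : Fin (2*n)) : evF n τ τ' i p = p.1 i := rfl
lemma evS_apply (p : Aprime n τ τ') : evS n τ τ' p = p.2 := rfl

lemma zsmul_mk (ι : ℤ) (x : ℂ) :
    ι • ((x : ℂ) : Ell τ) = (((ι : ℂ) * x : ℂ) : Ell τ) := by
  have h1 : ι • ((x : ℂ) : Ell τ) = ((ι • x : ℂ) : Ell τ) :=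
    (map_zsmul (QuotientAddGroup.mk' (Lam τ)) ι x).symm
  rw [h1, zsmul_eq_mul]

lemma nsmul_mk (t : ℕ) (x : ℂ) :
    t • ((x : ℂ) : Ell τ) = (((t : ℂ) * x : ℂ) : Ell τ) := by
  have h1 : t • ((x : ℂ) : Ell τ) = ((t • x : ℂ) : Ell τ) :=
    (map_nsmul (QuotientAddGroup.mk' (Lam τ)) t x).symm
  rw [h1, nsmul_eq_mul]

lemma smul_cpt_fst (t : ℕ) (j : Fin (2*n)) : ((t • cpt n τ τ').1) j = 0 := by
  have h := map_nsmul (evF n τ τ' j) t (cpt n τ τ')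
  rw [evF_apply, evF_apply] at h
  rw [h]
  show t • (0 : Ell τ) = 0
  simp

lemma smul_cpt_snd (t : ℕ) : ((t • cpt n τ τ').2) = t • cE' n τ' := by
  have h := map_nsmul (evS n τ τ') t (cpt n τ τ')
  rw [evS_apply, evS_apply] at h
  exact h

/-- `t/(4n)` is not in the lattice, for `0 < t < 4n`. -/
lemma frac_not_mem (hτ' : τ'.im ≠ 0) (hn : 0 < n) {t : ℕ} (ht0 : 0 < t) (ht : t < 4*n)
    (h : ((t : ℂ) * (1/(4*(n:ℂ))) : ℂ) ∈ Lam τ') : False := by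
  have h1 : ((t : ℂ) * (1/(4*(n:ℂ))) : ℂ)
      = (((t : ℝ)/(4*(n:ℝ)) : ℝ) : ℂ) + ((0:ℝ) : ℂ) * τ' := by push_cast; ring
  rw [h1] at h
  obtain ⟨a, b, ha, hb⟩ := lam_free hτ' h
  have hne : (4*(n:ℝ)) > 0 := by positivity
  have h2 : (t : ℝ) = 4*(n:ℝ)*a := by
    field_simp at ha
    linarith [ha]
  have h3 : (t : ℝ) > 0 := by exact_mod_cast ht0
  have h4 : (t : ℝ) < 4*(n:ℝ) := by exact_mod_cast ht
  have h5 : (0 : ℝ) < a := by nlinarith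
  have h6 : (a : ℝ) < 1 := by nlinarith
  have h7 : (0 : ℤ) < a := by exact_mod_cast h5
  have h8 : a < (1 : ℤ) := by exact_mod_cast h6
  omega

/-- Freeness of the rotations: `r1^t` has no fixed points for `0 < t < 4n`. -/
lemma rfree (hn : 0 < n) (hτ' : τ'.im ≠ 0) {t : ℕ} (ht0 : 0 < t) (ht : t < 4*n)
    (x : Aq n τ τ') : ((r1 n τ τ')^t) x ≠ x := by
  induction x using QuotientAddGroup.induction_on with
  | H z =>
    intro hx
    rw [r1_pow, aff_apply, Rq_pow_mk] at hx
    have h2 : t • (QuotientAddGroup.mk (cpt n τ τ') : Aq n τ τ')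
        = QuotientAddGroup.mk (t • cpt n τ τ') :=
      (map_nsmul (QuotientAddGroup.mk' (wsub n τ τ')) t _).symm
    rw [h2] at hx
    have h3 : (QuotientAddGroup.mk ((RA n τ τ' ^ t) z + t • cpt n τ τ') : Aq n τ τ')
        = QuotientAddGroup.mk z := by rw [← hx]; rfl
    have h4 := QuotientAddGroup.eq.mp h3
    rcases AddSubgroup.mem_closure_singleton.mp (by rw [wsub] at h4; exact h4) with ⟨ι, hι⟩
    have h5 := congrArg (evS n τ τ') hι
    rw [map_zsmul, evS_apply, evS_apply] at h5
    have h6 : (wpt n τ τ').2 = (0 : Ell τ') := rfl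
    rw [h6, smul_zero] at h5
    have h7 : (-((RA n τ τ' ^ t) z + t • cpt n τ τ') + z).2
        = -(((RA n τ τ' ^ t) z).2 + (t • cpt n τ τ').2) + z.2 := rfl
    rw [h7, RA_pow_snd, smul_cpt_snd] at h5
    have h8 : t • cE' n τ' = 0 := by
      have := h5.symm
      calc t • cE' n τ' = -(-(z.2 + t • cE' n τ') + z.2) := by abel
        _ = -(0 : Ell τ') := by rw [← this]
        _ = 0 := neg_zero
    rw [cE', nsmul_mk] at h8
    exact frac_not_mem hτ' hn ht0 ht ((QuotientAddGroup.eq_zero_iff _).mp h8)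

/-- `sg ∘ r1^t` on the quotient, description of the linear part's action. -/
lemma SqRq_pow_mk (t : ℕ) (z : Aprime n τ τ') :
    (Sq n τ τ' * (Rq n τ τ')^t : AddAut (Aq n τ τ')) (QuotientAddGroup.mk z)
      = QuotientAddGroup.mk (Smap n τ τ' ((RA n τ τ' ^ t) z)) := by
  have h1 : (Sq n τ τ' * (Rq n τ τ')^t : AddAut (Aq n τ τ')) (QuotientAddGroup.mk z)
      = Sq n τ τ' (((Rq n τ τ')^t) (QuotientAddGroup.mk z)) := rfl
  rw [h1, Rq_pow_mk, Sq_mk]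

/-- The map `Sq * Rq^t` is not the identity. -/
lemma ntransS (hn : 0 < n) (hτ' : τ'.im ≠ 0) (t : ℕ)
    (hall : ∀ x : Aq n τ τ', (Sq n τ τ' * (Rq n τ τ')^t : AddAut (Aq n τ τ')) x = x) : False := by
  set y : Aprime n τ τ' := ((fun _ => 0), ((1/3 : ℂ) : Ell τ')) with hy
  have hx := hall (QuotientAddGroup.mk y)
  rw [SqRq_pow_mk] at hx
  have h4 := QuotientAddGroup.eq.mp hx
  rcases AddSubgroup.mem_closure_singleton.mp (by rw [wsub] at h4; exact h4) with ⟨ι, hι⟩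
  have h5 := congrArg (evS n τ τ') hι
  rw [map_zsmul, evS_apply, evS_apply] at h5
  have h6 : (wpt n τ τ').2 = (0 : Ell τ') := rfl
  rw [h6, smul_zero] at h5
  have h7 : (-(Smap n τ τ' ((RA n τ τ' ^ t) y)) + y).2
      = -(-(((RA n τ τ' ^ t) y).2)) + y.2 := rfl
  rw [h7, RA_pow_snd, neg_neg] at h5
  have h8 : y.2 + y.2 = ((1/3 + 1/3 : ℂ) : Ell τ') := rfl
  have h9 : ((0 : Ell τ')) = ((1/3 + 1/3 : ℂ) : Ell τ') := by rw [h5, h8]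
  have h10 := QuotientAddGroup.eq.mp h9
  have h11 : -(0:ℂ) + (1/3 + 1/3) = ((2/3 : ℝ) : ℂ) + ((0:ℝ):ℂ) * τ' := by push_cast; ring
  rw [h11] at h10
  obtain ⟨a, b, ha, hb⟩ := lam_free hτ' h10
  have h12 : (3*a : ℝ) = 2 := by rw [← ha]; norm_num
  have h13 : (3*a : ℤ) = 2 := by exact_mod_cast h12
  omega

/-- The map `Rq^t` is not the identity for `0 < t < 4n`. -/
lemma ntransR (hn : 0 < n) (hτ : τ.im ≠ 0) {t : ℕ} (ht0 : 0 < t) (ht : t < 4*n)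
    (hall : ∀ x : Aq n τ τ', ((Rq n τ τ')^t) x = x) : False := by
  set dz : Aprime n τ τ' :=
    ((fun j => if j.val = 0 then ((1/3 : ℂ) : Ell τ) else 0), 0) with hdz
  have hx := hall (QuotientAddGroup.mk dz)
  rw [Rq_pow_mk] at hx
  have h4 := QuotientAddGroup.eq.mp hx
  rcases AddSubgroup.mem_closure_singleton.mp (by rw [wsub] at h4; exact h4) with ⟨ι, hι⟩
  have h5 := congrArg (evF n τ τ' ⟨0, by omega⟩) hι
  rw [map_zsmul, evF_apply, evF_apply] at h5
  have h6 : (wpt n τ τ').1 ⟨0, by omega⟩ = ((1/2 : ℂ) : Ell τ) := rfl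
  rw [h6, zsmul_mk] at h5
  have h7 : (-((RA n τ τ' ^ t) dz) + dz).1 ⟨0, by omega⟩
      = -(((RA n τ τ' ^ t) dz).1 ⟨0, by omega⟩) + dz.1 ⟨0, by omega⟩ := rfl
  rw [h7, RA_pow_fst hn] at h5
  have hz0 : dz.1 ⟨0, by omega⟩ = ((1/3 : ℂ) : Ell τ) := by
    rw [hdz]
    show (if (0:ℕ) = 0 then ((1/3 : ℂ) : Ell τ) else 0) = _
    rw [if_pos rfl]
  rw [hz0] at h5
  have hidx : (((⟨0, by omega⟩ : Fin (2*n)).val : ℤ)) - t = ((4*n - t : ℕ) : ℤ) - 4*(n:ℤ) := by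
    simp only [Fin.val_mk]; omega
  rw [hidx, uex_sub_four hn] at h5
  by_cases h2n : t = 2*n
  · have hv : uex n dz.1 ((4*n - t : ℕ) : ℤ) = -((1/3 : ℂ) : Ell τ) := by
      rw [uex_natCast' hn dz.1 (4*n-t) (by omega) (by omega)]
      have : dz.1 ⟨4*n-t-2*n, by omega⟩ = ((1/3 : ℂ) : Ell τ) := by
        rw [hdz]
        show (if (4*n-t-2*n) = 0 then ((1/3 : ℂ) : Ell τ) else 0) = _
        rw [if_pos (by omega)]
      rw [this]
    rw [hv, neg_neg] at h5
    have h9 : ((((ι:ℂ)) * (1/2) : ℂ) : Ell τ) = ((1/3 + 1/3 : ℂ) : Ell τ) := by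
      rw [h5]; rfl
    have h10 := QuotientAddGroup.eq.mp h9
    have h11 : -((ι:ℂ) * (1/2)) + (1/3 + 1/3)
        = ((2/3 - ι/2 : ℝ) : ℂ) + ((0:ℝ):ℂ) * τ := by push_cast; ring
    rw [h11] at h10
    obtain ⟨a, b, ha, hb⟩ := lam_free hτ h10
    have h12 : (6*a : ℝ) = 4 - 3*ι := by rw [← ha]; ring
    have h13 : (6*a : ℤ) = 4 - 3*ι := by exact_mod_cast h12
    omega
  · have hv : uex n dz.1 ((4*n - t : ℕ) : ℤ) = 0 := by
      by_cases h4n : 4*n - t < 2*n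
      · rw [uex_natCast hn dz.1 (4*n-t) h4n]
        rw [hdz]
        show (if (4*n-t) = 0 then ((1/3 : ℂ) : Ell τ) else 0) = _
        rw [if_neg (by omega)]
      · rw [uex_natCast' hn dz.1 (4*n-t) (by omega) (by omega)]
        have : dz.1 ⟨4*n-t-2*n, by omega⟩ = 0 := by
          rw [hdz]
          show (if (4*n-t-2*n) = 0 then ((1/3 : ℂ) : Ell τ) else 0) = _
          rw [if_neg (by omega)]
        rw [this, neg_zero]
    rw [hv, neg_zero, zero_add] at h5
    have h10 := QuotientAddGroup.eq.mp h5.symm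
    have h11 : -(1/3 : ℂ) + ((ι:ℂ) * (1/2))
        = ((ι/2 - 1/3 : ℝ) : ℂ) + ((0:ℝ):ℂ) * τ := by push_cast; ring
    rw [h11] at h10
    obtain ⟨a, b, ha, hb⟩ := lam_free hτ h10
    have h12 : (6*a : ℝ) = 3*ι - 2 := by rw [← ha]; ring
    have h13 : (6*a : ℤ) = 3*ι - 2 := by exact_mod_cast h12
    omega

lemma bvec_mk (v : ℕ) (hv : v < 2*n) :
    bvec n τ ⟨v, hv⟩
      = if v % 2 = 0 then ((1/2 + τ/2 : ℂ) : Ell τ) else ((τ/2 : ℂ) : Ell τ) := rfl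

/-- Freeness of the reflections: `sg * r1^t` has no fixed points for `t < 4n`. -/
lemma sfree (hn : 0 < n) (hτ : τ.im ≠ 0) {t : ℕ} (ht : t < 4*n) (x : Aq n τ τ') :
    (sg n τ τ' * (r1 n τ τ')^t) x ≠ x := by
  induction x using QuotientAddGroup.induction_on with
  | H z =>
    intro hx
    rw [sg, r1_pow, aff_mul, aff_apply] at hx
    rw [SqRq_pow_mk] at hx
    have h2 : t • (QuotientAddGroup.mk (cpt n τ τ') : Aq n τ τ')
        = QuotientAddGroup.mk (t • cpt n τ τ') :=
      (map_nsmul (QuotientAddGroup.mk' (wsub n τ τ')) t _).symm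
    rw [h2, Sq_mk] at hx
    have h3 : (QuotientAddGroup.mk (Smap n τ τ' ((RA n τ τ' ^ t) z)
        + (Smap n τ τ' (t • cpt n τ τ') + bpt n τ τ')) : Aq n τ τ')
        = QuotientAddGroup.mk z := by rw [← hx]; rfl
    have h4 := QuotientAddGroup.eq.mp h3
    rcases AddSubgroup.mem_closure_singleton.mp (by rw [wsub] at h4; exact h4) with ⟨ι, hι⟩
    have hEQ : ∀ (v : ℕ) (hv : v < 2*n),
        uex n z.1 (((2*n-1-v : ℕ) : ℤ) - t) - bvec n τ ⟨v, hv⟩ + uex n z.1 ((v : ℕ) : ℤ)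
          = ι • (((1/2 : ℂ)) : Ell τ) := by
      intro v hv
      have h5 := congrArg (evF n τ τ' ⟨v, hv⟩) hι
      rw [map_zsmul, evF_apply, evF_apply] at h5
      have h6 : (wpt n τ τ').1 ⟨v, hv⟩ = ((1/2 : ℂ) : Ell τ) := rfl
      rw [h6] at h5
      have h7 : (-(Smap n τ τ' ((RA n τ τ' ^ t) z)
          + (Smap n τ τ' (t • cpt n τ τ') + bpt n τ τ')) + z).1 ⟨v, hv⟩
          = -((Smap n τ τ' ((RA n τ τ' ^ t) z)).1 ⟨v, hv⟩
            + ((Smap n τ τ' (t • cpt n τ τ')).1 ⟨v, hv⟩ + bvec n τ ⟨v, hv⟩)) + z.1 ⟨v, hv⟩ := rfl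
      rw [h7] at h5
      have h8 : (Smap n τ τ' ((RA n τ τ' ^ t) z)).1 ⟨v, hv⟩
          = -((RA n τ τ' ^ t) z).1 ⟨2*n-1-v, by omega⟩ := rfl
      have h9 : (Smap n τ τ' (t • cpt n τ τ')).1 ⟨v, hv⟩
          = -((t • cpt n τ τ').1 ⟨2*n-1-v, by omega⟩) := rfl
      rw [h8, h9, smul_cpt_fst, RA_pow_fst hn] at h5
      have h10 : z.1 ⟨v, hv⟩ = uex n z.1 ((v : ℕ) : ℤ) := (uex_natCast hn z.1 v hv).symm
      rw [h10, neg_zero, zero_add] at h5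
      have h11 : (((⟨2*n-1-v, by omega⟩ : Fin (2*n)).val : ℤ)) - t
          = ((2*n-1-v : ℕ) : ℤ) - t := by simp only [Fin.val_mk]
      rw [h11] at h5
      calc uex n z.1 (((2*n-1-v : ℕ) : ℤ) - t) - bvec n τ ⟨v, hv⟩ + uex n z.1 ((v : ℕ) : ℤ)
          = -(-(uex n z.1 (((2*n-1-v : ℕ) : ℤ) - t)) + bvec n τ ⟨v, hv⟩)
            + uex n z.1 ((v : ℕ) : ℤ) := by abel
        _ = ι • (((1/2 : ℂ)) : Ell τ) := h5.symm
    rcases Nat.even_or_odd t with hte | hto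
    · have hte2 : t % 2 = 0 := Nat.even_iff.mp hte
      by_cases h2n : t < 2*n
      · have h0 := hEQ 0 (by omega)
        have h1 := hEQ (2*n-1-t) (by omega)
        have e0 : ((2*n-1-0 : ℕ) : ℤ) - t = ((2*n-1-t : ℕ) : ℤ) := by omega
        have e1 : ((2*n-1-(2*n-1-t) : ℕ) : ℤ) - t = ((0 : ℕ) : ℤ) := by omega
        rw [e0] at h0
        rw [e1] at h1
        have hb0 : bvec n τ ⟨0, by omega⟩ = ((1/2 + τ/2 : ℂ) : Ell τ) := by
          rw [bvec_mk, if_pos (by omega)]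
        have hb1 : bvec n τ ⟨2*n-1-t, by omega⟩ = ((τ/2 : ℂ) : Ell τ) := by
          rw [bvec_mk, if_neg (by omega)]
        rw [hb0] at h0
        rw [hb1] at h1
        have hh := h0.trans h1.symm
        have h4' : ((τ/2 : ℂ) : Ell τ) - ((1/2 + τ/2 : ℂ) : Ell τ) = 0 := by
          calc ((τ/2 : ℂ) : Ell τ) - ((1/2 + τ/2 : ℂ) : Ell τ)
              = (uex n z.1 ((2*n-1-t : ℕ) : ℤ) - ((1/2 + τ/2 : ℂ) : Ell τ)
                  + uex n z.1 ((0 : ℕ) : ℤ))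
                - (uex n z.1 ((0 : ℕ) : ℤ) - ((τ/2 : ℂ) : Ell τ)
                  + uex n z.1 ((2*n-1-t : ℕ) : ℤ)) := by abel
            _ = 0 := by rw [hh]; exact sub_self _
        have h5' : ((τ/2 - (1/2 + τ/2) : ℂ) : Ell τ) = 0 := by rw [← h4']; rfl
        have h6' := (QuotientAddGroup.eq_zero_iff _).mp h5'
        rw [show (τ/2 - (1/2 + τ/2) : ℂ) = ((-(1/2) : ℝ) : ℂ) + ((0:ℝ):ℂ)*τ by push_cast; ring]
          at h6'
        obtain ⟨a, b, ha, hb⟩ := lam_free hτ h6'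
        have h12 : (2*a : ℝ) = -1 := by rw [← ha]; ring
        have h13 : (2*a : ℤ) = -1 := by exact_mod_cast h12
        omega
      · have h0 := hEQ 0 (by omega)
        have h1 := hEQ (4*n-1-t) (by omega)
        have e0 : ((2*n-1-0 : ℕ) : ℤ) - t = ((4*n-1-t : ℕ) : ℤ) - 2*(n:ℤ) := by omega
        have e1 : ((2*n-1-(4*n-1-t) : ℕ) : ℤ) - t = ((0 : ℕ) : ℤ) - 2*(n:ℤ) := by omega
        rw [e0, uex_sub_two hn] at h0
        rw [e1, uex_sub_two hn] at h1
        have hb0 : bvec n τ ⟨0, by omega⟩ = ((1/2 + τ/2 : ℂ) : Ell τ) := by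
          rw [bvec_mk, if_pos (by omega)]
        have hb1 : bvec n τ ⟨4*n-1-t, by omega⟩ = ((τ/2 : ℂ) : Ell τ) := by
          rw [bvec_mk, if_neg (by omega)]
        rw [hb0] at h0
        rw [hb1] at h1
        have hsum : -(((1/2 + τ/2 : ℂ) : Ell τ) + ((τ/2 : ℂ) : Ell τ))
            = ι • (((1/2 : ℂ)) : Ell τ) + ι • (((1/2 : ℂ)) : Ell τ) := by
          calc -(((1/2 + τ/2 : ℂ) : Ell τ) + ((τ/2 : ℂ) : Ell τ))
              = (-uex n z.1 ((4*n-1-t : ℕ) : ℤ) - ((1/2 + τ/2 : ℂ) : Ell τ)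
                  + uex n z.1 ((0 : ℕ) : ℤ))
                + (-uex n z.1 ((0 : ℕ) : ℤ) - ((τ/2 : ℂ) : Ell τ)
                  + uex n z.1 ((4*n-1-t : ℕ) : ℤ)) := by abel
            _ = _ := by rw [h0, h1]
        rw [zsmul_mk] at hsum
        have h9 : ((-((1/2 + τ/2) + τ/2) : ℂ) : Ell τ)
            = ((((ι:ℂ)*(1/2) + (ι:ℂ)*(1/2)) : ℂ) : Ell τ) := by
          calc ((-((1/2 + τ/2) + τ/2) : ℂ) : Ell τ)
              = -(((1/2 + τ/2 : ℂ) : Ell τ) + ((τ/2 : ℂ) : Ell τ)) := rfl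
            _ = (((ι:ℂ)*(1/2) : ℂ) : Ell τ) + (((ι:ℂ)*(1/2) : ℂ) : Ell τ) := hsum
            _ = ((((ι:ℂ)*(1/2) + (ι:ℂ)*(1/2)) : ℂ) : Ell τ) := rfl
        have h10 := QuotientAddGroup.eq.mp h9
        rw [show -(-((1/2 + τ/2) + τ/2) : ℂ) + ((ι:ℂ)*(1/2) + (ι:ℂ)*(1/2))
          = ((1/2 + ι : ℝ) : ℂ) + ((1:ℝ):ℂ)*τ by push_cast; ring] at h10
        obtain ⟨a, b, ha, hb⟩ := lam_free hτ h10
        have h12 : (2*a : ℝ) = 1 + 2*ι := by rw [← ha]; ring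
        have h13 : (2*a : ℤ) = 1 + 2*ι := by exact_mod_cast h12
        omega
    · have hto2 : t % 2 = 1 := Nat.odd_iff.mp hto
      have he2 : 2*((t+1)/2) = t+1 := by omega
      have h1 := hEQ (2*n - (t+1)/2) (by omega)
      have e1 : ((2*n-1-(2*n - (t+1)/2) : ℕ) : ℤ) - t
          = ((2*n - (t+1)/2 : ℕ) : ℤ) - 2*(n:ℤ) := by omega
      rw [e1, uex_sub_two hn] at h1
      have h4' : -(bvec n τ ⟨2*n - (t+1)/2, by omega⟩) = ι • (((1/2 : ℂ)) : Ell τ) := by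
        calc -(bvec n τ ⟨2*n - (t+1)/2, by omega⟩)
            = -uex n z.1 ((2*n - (t+1)/2 : ℕ) : ℤ) - bvec n τ ⟨2*n - (t+1)/2, by omega⟩
              + uex n z.1 ((2*n - (t+1)/2 : ℕ) : ℤ) := by abel
          _ = _ := h1
      rw [zsmul_mk] at h4'
      rcases Nat.even_or_odd (2*n - (t+1)/2) with hpe | hpo
      · have hb : bvec n τ ⟨2*n - (t+1)/2, by omega⟩ = ((1/2 + τ/2 : ℂ) : Ell τ) := by
          rw [bvec_mk, if_pos (Nat.even_iff.mp hpe)]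
        rw [hb] at h4'
        have h9 : ((-(1/2 + τ/2) : ℂ) : Ell τ) = (((ι:ℂ)*(1/2) : ℂ) : Ell τ) := by
          rw [← h4']; rfl
        have h10 := QuotientAddGroup.eq.mp h9
        rw [show -(-(1/2 + τ/2) : ℂ) + ((ι:ℂ)*(1/2))
          = ((1/2 + ι/2 : ℝ) : ℂ) + ((1/2:ℝ):ℂ)*τ by push_cast; ring] at h10
        obtain ⟨a, b, ha, hb'⟩ := lam_free hτ h10
        have h12 : (2*b : ℝ) = 1 := by rw [← hb']; ring
        have h13 : (2*b : ℤ) = 1 := by exact_mod_cast h12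
        omega
      · have hb : bvec n τ ⟨2*n - (t+1)/2, by omega⟩ = ((τ/2 : ℂ) : Ell τ) := by
          rw [bvec_mk, if_neg (by have := Nat.odd_iff.mp hpo; omega)]
        rw [hb] at h4'
        have h9 : ((-(τ/2) : ℂ) : Ell τ) = (((ι:ℂ)*(1/2) : ℂ) : Ell τ) := by
          rw [← h4']; rfl
        have h10 := QuotientAddGroup.eq.mp h9
        rw [show -(-(τ/2) : ℂ) + ((ι:ℂ)*(1/2))
          = ((ι/2 : ℝ) : ℂ) + ((1/2:ℝ):ℂ)*τ by push_cast; ring] at h10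
        obtain ⟨a, b, ha, hb'⟩ := lam_free hτ h10
        have h12 : (2*b : ℝ) = 1 := by rw [← hb']; ring
        have h13 : (2*b : ℤ) = 1 := by exact_mod_cast h12
        omega

end St18

open St18

/-- for any m ≥ 1, with N = lcm(4, m) and n = N/4, the dihedral group D_m
embeds into the bijections of A = A'/⟨w⟩ (A' = E^{2n} × E' of dimension N/2 + 1), acting
by affine transformations, freely, and without translations. -/
theorem stmt_18 (m : ℕ) (hm : 1 ≤ m) (τ τ' : ℂ) (hτ : τ.im ≠ 0) (hτ' : τ'.im ≠ 0) :
    ∃ ψ : DihedralGroup m →* Equiv.Perm (Aq (Nat.lcm 4 m / 4) τ τ'),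
      Function.Injective ψ ∧
      (∀ g : DihedralGroup m,
        ∃ α : Aq (Nat.lcm 4 m / 4) τ τ' ≃+ Aq (Nat.lcm 4 m / 4) τ τ',
        ∃ a : Aq (Nat.lcm 4 m / 4) τ τ',
          ∀ x, ψ g x = α x + a) ∧
      (∀ g : DihedralGroup m, g ≠ 1 →
        (∀ x, ψ g x ≠ x) ∧
        ¬ ∃ a : Aq (Nat.lcm 4 m / 4) τ τ', ∀ x, ψ g x = x + a) := by
  classical
  haveI : NeZero m := ⟨by omega⟩
  set n := Nat.lcm 4 m / 4 with hndef
  have hlcm0 : Nat.lcm 4 m ≠ 0 := Nat.lcm_ne_zero (by norm_num) (by omega)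
  have hn4 : 4 * n = Nat.lcm 4 m := Nat.mul_div_cancel' (Nat.dvd_lcm_left 4 m)
  have hn : 0 < n := by
    rcases Nat.eq_zero_or_pos n with h | h
    · exfalso; apply hlcm0; omega
    · exact h
  have hmdvd : m ∣ 4*n := by rw [hn4]; exact Nat.dvd_lcm_right 4 m
  set k := 4*n/m with hkdef
  have hk : k * m = 4*n := Nat.div_mul_cancel hmdvd
  have hk0 : 0 < k := by
    have hne : k ≠ 0 := by intro h0; rw [h0, zero_mul] at hk; omega
    exact Nat.pos_of_ne_zero hne
  have hTlt : ∀ i : ZMod m, k * i.val < 4*n := by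
    intro i
    have hivlt : i.val < m := ZMod.val_lt i
    have h9 : k * i.val + k ≤ k * m := by
      calc k * i.val + k = k * (i.val + 1) := by ring
        _ ≤ k * m := Nat.mul_le_mul_left k (by omega)
    omega
  set ρ : Equiv.Perm (Aq n τ τ') := (r1 n τ τ')^k with hρdef
  set σ : Equiv.Perm (Aq n τ τ') := sg n τ τ' with hσdef
  have hρm : ρ^m = 1 := by rw [hρdef, ← pow_mul, hk, r1_pow_4n hn]
  have hss : σ * σ = 1 := sg_sg
  have hσinv : σ⁻¹ = σ := inv_eq_of_mul_eq_one_right hss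
  have hconj1 : σ * r1 n τ τ' * σ = (r1 n τ τ')⁻¹ := sg_r1_sg
  have hconjt : ∀ a : ℕ, σ * (r1 n τ τ')^a * σ = ((r1 n τ τ')^a)⁻¹ := by
    intro a
    have h2 := map_pow (MulAut.conj σ) (r1 n τ τ') a
    rw [MulAut.conj_apply, MulAut.conj_apply, hσinv] at h2
    rw [h2, hconj1, inv_pow]
  have hconjρ : ∀ a : ℕ, σ * ρ^a * σ = (ρ^a)⁻¹ := by
    intro a
    rw [hρdef, ← pow_mul]
    exact hconjt _
  have hmove : ∀ a : ℕ, ρ^a * σ = σ * (ρ^a)⁻¹ := by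
    intro a
    have h2 : σ * (σ * ρ^a * σ) = ρ^a * σ := by
      rw [show σ * (σ * ρ^a * σ) = (σ * σ) * (ρ^a * σ) by group, hss, one_mul]
    rw [← h2, hconjρ a]
  have hpowmod : ∀ a : ℕ, ρ^a = ρ^(a % m) := by
    intro a
    conv_lhs => rw [← Nat.mod_add_div a m]
    rw [pow_add, pow_mul, hρm, one_pow, mul_one]
  have hval : ∀ i j : ZMod m, ρ^((i + j).val) = ρ^(i.val) * ρ^(j.val) := by
    intro i j
    rw [ZMod.val_add, ← pow_add]
    exact (hpowmod _).symm
  have hneg : ∀ i : ZMod m, ρ^((-i).val) = (ρ^(i.val))⁻¹ := by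
    intro i
    have h := hval (-i) i
    rw [neg_add_cancel, ZMod.val_zero, pow_zero] at h
    exact eq_inv_of_mul_eq_one_left h.symm
  have hsub : ∀ i j : ZMod m, ρ^((j - i).val) = (ρ^(i.val))⁻¹ * ρ^(j.val) := by
    intro i j
    rw [sub_eq_neg_add, hval, hneg]
  let Fm : DihedralGroup m → Equiv.Perm (Aq n τ τ') := fun g =>
    match g with
    | DihedralGroup.r i => ρ^(i.val)
    | DihedralGroup.sr i => σ * ρ^(i.val)
  have hmul : ∀ x y, Fm (x * y) = Fm x * Fm y := by
    intro x y
    cases x with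
    | r i =>
      cases y with
      | r j =>
        rw [DihedralGroup.r_mul_r]
        show ρ^((i+j).val) = ρ^(i.val) * ρ^(j.val)
        exact hval i j
      | sr j =>
        rw [DihedralGroup.r_mul_sr]
        show σ * ρ^((j - i).val) = ρ^(i.val) * (σ * ρ^(j.val))
        rw [hsub i j,
          show ρ^(i.val) * (σ * ρ^(j.val)) = (ρ^(i.val) * σ) * ρ^(j.val)
            from (mul_assoc _ _ _).symm,
          hmove i.val, mul_assoc]
    | sr i =>
      cases y with
      | r j =>
        rw [DihedralGroup.sr_mul_r]
        show σ * ρ^((i+j).val) = (σ * ρ^(i.val)) * ρ^(j.val)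
        rw [hval, mul_assoc]
      | sr j =>
        rw [DihedralGroup.sr_mul_sr]
        show ρ^((j - i).val) = (σ * ρ^(i.val)) * (σ * ρ^(j.val))
        rw [hsub i j,
          show (σ * ρ^(i.val)) * (σ * ρ^(j.val)) = σ * (ρ^(i.val) * σ) * ρ^(j.val) by group,
          hmove i.val,
          show σ * (σ * (ρ^(i.val))⁻¹) * ρ^(j.val) = (σ * σ) * ((ρ^(i.val))⁻¹ * ρ^(j.val))
            by group,
          hss, one_mul]
  set ψ : DihedralGroup m →* Equiv.Perm (Aq n τ τ') := MonoidHom.mk' Fm hmul with hψdef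
  have hψr : ∀ i : ZMod m, ψ (DihedralGroup.r i) = (r1 n τ τ')^(k * i.val) := by
    intro i
    show ρ^(i.val) = _
    rw [hρdef, ← pow_mul]
  have hψsr : ∀ i : ZMod m, ψ (DihedralGroup.sr i) = sg n τ τ' * (r1 n τ τ')^(k * i.val) := by
    intro i
    show σ * ρ^(i.val) = _
    rw [hρdef, ← pow_mul, hσdef]
  have hFree : ∀ g : DihedralGroup m, g ≠ 1 → ∀ x, ψ g x ≠ x := by
    intro g hg x
    cases g with
    | r i =>
      have hi : i ≠ 0 := by
        intro h
        apply hg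
        rw [h]
        exact DihedralGroup.one_def.symm
      have hival : i.val ≠ 0 := fun h => hi ((ZMod.val_eq_zero i).mp h)
      rw [hψr]
      exact rfree hn hτ' (Nat.mul_pos hk0 (Nat.pos_of_ne_zero hival)) (hTlt i) x
    | sr i =>
      rw [hψsr]
      exact sfree hn hτ (hTlt i) x
  have hInj : Function.Injective ψ := by
    refine (injective_iff_map_eq_one ψ).mpr ?_
    intro g hg1
    by_contra hgne
    have h1 := hFree g hgne 0
    rw [hg1] at h1
    exact h1 rfl
  have hAff : ∀ g : DihedralGroup m,
      ∃ α : Aq n τ τ' ≃+ Aq n τ τ', ∃ a : Aq n τ τ', ∀ x, ψ g x = α x + a := by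
    intro g
    cases g with
    | r i =>
      refine ⟨((Rq n τ τ')^(k * i.val) : AddAut (Aq n τ τ')),
        (k * i.val) • QuotientAddGroup.mk (cpt n τ τ'), fun x => ?_⟩
      rw [hψr, r1_pow, aff_apply]
    | sr i =>
      refine ⟨((Sq n τ τ' * (Rq n τ τ')^(k * i.val)) : AddAut (Aq n τ τ')),
        Sq n τ τ' ((k * i.val) • QuotientAddGroup.mk (cpt n τ τ'))
          + QuotientAddGroup.mk (bpt n τ τ'), fun x => ?_⟩
      rw [hψsr, sg, r1_pow, aff_mul, aff_apply]
  have hNT : ∀ g : DihedralGroup m, g ≠ 1 →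
      ¬ ∃ a : Aq n τ τ', ∀ x, ψ g x = x + a := by
    intro g hg
    rintro ⟨a, ha⟩
    cases g with
    | r i =>
      have hi : i ≠ 0 := by
        intro h
        apply hg
        rw [h]
        exact DihedralGroup.one_def.symm
      have hival : i.val ≠ 0 := fun h => hi ((ZMod.val_eq_zero i).mp h)
      rw [hψr] at ha
      have h0 := ha 0
      rw [r1_pow, aff_apply] at h0
      have hz : ((Rq n τ τ')^(k * i.val) : AddAut (Aq n τ τ')) 0 = 0 := map_zero _
      rw [hz, zero_add (M := Aq n τ τ'), zero_add (M := Aq n τ τ')] at h0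
      have hall : ∀ x, ((Rq n τ τ')^(k * i.val)) x = x := by
        intro x
        have h1 := ha x
        rw [r1_pow, aff_apply, h0] at h1
        exact (add_neg_cancel_right (G := Aq n τ τ') _ a).symm.trans
          ((congrArg (· + -a) h1).trans (add_neg_cancel_right (G := Aq n τ τ') _ a))
      exact ntransR hn hτ (Nat.mul_pos hk0 (Nat.pos_of_ne_zero hival)) (hTlt i) hall
    | sr i =>
      rw [hψsr] at ha
      have h0 := ha 0
      rw [sg, r1_pow, aff_mul, aff_apply] at h0
      have hz : ((Sq n τ τ' * (Rq n τ τ')^(k * i.val)) : AddAut (Aq n τ τ')) 0 = 0 := map_zero _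
      rw [hz, zero_add (M := Aq n τ τ'), zero_add (M := Aq n τ τ')] at h0
      have hall : ∀ x, ((Sq n τ τ' * (Rq n τ τ')^(k * i.val)) : AddAut (Aq n τ τ')) x = x := by
        intro x
        have h1 := ha x
        rw [sg, r1_pow, aff_mul, aff_apply, h0] at h1
        exact (add_neg_cancel_right (G := Aq n τ τ') _ a).symm.trans
          ((congrArg (· + -a) h1).trans (add_neg_cancel_right (G := Aq n τ τ') _ a))
      exact ntransS hn hτ' (k * i.val) hall
  exact ⟨ψ, hInj, hAff, fun g hg => ⟨hFree g hg, hNT g hg⟩⟩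
end
end
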